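/- arXiv:2104.06716 — 5 statements merged into one kernel-verified Lean document; each statement's English description precedes it below -/
import Mathlib

section
/- Let α be irrational with inf_{q≥1} q^c ‖qα‖ > 0 for some 1 ≤ c < 2. Then the series ∑_{m=1}^∞ 1/(m² ‖mα‖) converges. -/
/-- Distance from `x` to the nearest integer. -/
noncomputable def nint (x : ℝ) : ℝ := |x - (round x : ℝ)|

open Finset

/-- Sum of reciprocals of δ-separated values bounded below by a. -/
lemma sep_sum (f : ℕ → ℝ) (δ : ℝ) (hδ : 0 < δ) :
    ∀ (m : ℕ) (S : Finset ℕ) (a : ℝ), 0 < a → S.card = m →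
      (∀ q ∈ S, a ≤ f q) →
      (∀ q ∈ S, ∀ r ∈ S, q ≠ r → δ ≤ |f q - f r|) →
      ∑ q ∈ S, 1 / f q ≤ ∑ i ∈ range m, 1 / (a + i * δ) := by
  intro m
  induction m with
  | zero => intro S a ha hcard _ _; simp [Finset.card_eq_zero.mp hcard]
  | succ n ih =>
    intro S a ha hcard hlb hsep
    have hne : S.Nonempty := by rw [← Finset.card_pos, hcard]; omega
    obtain ⟨q₀, hq₀S, hq₀min⟩ := S.exists_min_image f hne
    have ha₀ : a ≤ f q₀ := hlb q₀ hq₀S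
    have hS' : (S.erase q₀).card = n := by rw [Finset.card_erase_of_mem hq₀S, hcard]; omega
    have key := ih (S.erase q₀) (a + δ) (by linarith) hS'
      (fun q hq => by
        have hqS := Finset.mem_of_mem_erase hq
        have h1 := hq₀min q hqS
        have h2 := hsep q hqS q₀ hq₀S (Finset.ne_of_mem_erase hq)
        rw [abs_of_nonneg (by linarith)] at h2
        linarith)
      (fun q hq r hr hne' =>
        hsep q (Finset.mem_of_mem_erase hq) r (Finset.mem_of_mem_erase hr) hne')
    have hsplit : ∑ q ∈ S, 1 / f q = 1 / f q₀ + ∑ q ∈ S.erase q₀, 1 / f q :=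
      (Finset.add_sum_erase _ _ hq₀S).symm
    have hcongr : ∑ i ∈ range n, 1 / ((a + δ) + i * δ)
        = ∑ i ∈ range n, 1 / (a + (i + 1 : ℕ) * δ) := by
      apply Finset.sum_congr rfl
      intro i _
      push_cast
      ring_nf
    rw [hsplit, Finset.sum_range_succ']
    have h0 : 1 / f q₀ ≤ 1 / (a + (0:ℕ) * δ) := by
      simp only [Nat.cast_zero, zero_mul, add_zero]
      exact one_div_le_one_div_of_le ha ha₀
    have := hcongr ▸ key
    linarith

/-- Harmonic number bound. -/
lemma harm_le (k : ℕ) : ∑ i ∈ range (2 ^ k), (1:ℝ) / (i + 1) ≤ k + 1 := by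
  induction k with
  | zero => norm_num
  | succ k ih =>
    have h2 : (2:ℕ) ^ (k+1) = 2 ^ k + 2 ^ k := by ring
    rw [h2, ← Finset.sum_range_add_sum_Ico _ (Nat.le_add_right _ _)]
    have htail : ∑ i ∈ Finset.Ico (2^k) (2^k + 2^k : ℕ), (1:ℝ) / (i + 1) ≤ 1 := by
      have hb : ∀ i ∈ Finset.Ico (2^k) (2^k + 2^k : ℕ), (1:ℝ) / ((i:ℝ) + 1) ≤ 1 / 2 ^ k := by
        intro i hi
        rw [Finset.mem_Ico] at hi
        have : (2:ℝ) ^ k ≤ (i:ℝ) + 1 := by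
          have := hi.1
          have : (2^k : ℝ) ≤ (i : ℝ) := by exact_mod_cast this
          linarith
        exact one_div_le_one_div_of_le (by positivity) this
      calc ∑ i ∈ Finset.Ico (2^k) (2^k + 2^k : ℕ), (1:ℝ) / (i + 1)
          ≤ ∑ _i ∈ Finset.Ico (2^k) (2^k + 2^k : ℕ), (1:ℝ) / 2 ^ k := Finset.sum_le_sum hb
        _ = (2^k : ℝ) * (1 / 2 ^ k) := by
            rw [Finset.sum_const, Nat.card_Ico, Nat.add_sub_cancel, nsmul_eq_mul]
            push_cast
            ring
        _ = 1 := by field_simp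
    push_cast
    linarith

set_option maxHeartbeats 1000000 in
theorem stmt4 (α : ℝ) (hα : Irrational α) (c : ℝ) (hc1 : 1 ≤ c) (hc2 : c < 2)
    (h : ∃ K > 0, ∀ q : ℕ, 1 ≤ q → K ≤ (q : ℝ) ^ c * nint (q * α)) :
    Summable (fun m : ℕ => 1 / (((m : ℝ) + 1) ^ 2 * nint (((m : ℝ) + 1) * α))) := by
  obtain ⟨K, hK, hq⟩ := h
  set r : ℝ := (2:ℝ) ^ (c - 2) with hr
  have hr0 : 0 < r := Real.rpow_pos_of_pos two_pos _
  have hr1 : r < 1 := Real.rpow_lt_one_of_one_lt_of_neg one_lt_two (by linarith)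
  set T : ℕ → ℝ := fun q => 1 / ((q:ℝ) ^ 2 * nint ((q:ℝ) * α)) with hT
  have hnintnn : ∀ x : ℝ, 0 ≤ nint x := fun x => abs_nonneg _
  have hTnn : ∀ q, 0 ≤ T q := fun q => by
    apply div_nonneg zero_le_one
    exact mul_nonneg (by positivity) (hnintnn _)
  set g : ℕ → ℝ := fun k => (8 / K) * ((k:ℝ) + 1) * r ^ k with hg
  have hgnn : ∀ k, 0 ≤ g k := fun k => by
    apply mul_nonneg (mul_nonneg (by positivity) (by positivity)) (by positivity)
  -- block bound
  have block : ∀ k : ℕ, ∑ q ∈ Finset.Ico (2^k) (2^(k+1)), T q ≤ g k := by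
    intro k
    set n : ℕ := 2 ^ k with hn
    have hn1 : 1 ≤ n := Nat.one_le_two_pow
    have hIco : Finset.Ico (2^k) (2^(k+1)) = Finset.Ico n (2*n) := by
      rw [hn, pow_succ, Nat.mul_comm]
    have h2kc : (0:ℝ) < (2:ℝ) ^ ((k:ℝ) * c) := Real.rpow_pos_of_pos two_pos _
    set δ : ℝ := K / (2:ℝ) ^ ((k:ℝ) * c) with hδdef
    have hδ : 0 < δ := div_pos hK h2kc
    have hncast : ((n:ℝ)) = (2:ℝ) ^ ((k:ℝ)) := by
      rw [hn]; push_cast; rw [← Real.rpow_natCast 2 k]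
    have hnc : ((n:ℝ)) ^ c = (2:ℝ) ^ ((k:ℝ) * c) := by
      rw [hncast, ← Real.rpow_mul (by norm_num : (0:ℝ) ≤ 2)]
    have hnpos : (0:ℝ) < (n:ℝ) := by exact_mod_cast hn1
    -- lower bound for nint on the block
    have hflow : ∀ q ∈ Finset.Ico n (2*n), δ / 4 ≤ nint ((q:ℝ) * α) := by
      intro q hqm
      rw [Finset.mem_Ico] at hqm
      have hq1 : 1 ≤ q := le_trans hn1 hqm.1
      have hnn : 0 ≤ nint ((q:ℝ) * α) := hnintnn _
      have hqcle : ((q:ℝ)) ^ c ≤ 4 * (2:ℝ) ^ ((k:ℝ) * c) := by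
        have hqle : (q:ℝ) ≤ 2 * (n:ℝ) := by exact_mod_cast hqm.2.le
        have h2c : (2:ℝ) ^ c ≤ 4 := by
          have h1 : (2:ℝ) ^ c ≤ (2:ℝ) ^ (2:ℝ) :=
            Real.rpow_le_rpow_of_exponent_le one_le_two hc2.le
          have h2 := Real.rpow_natCast (2:ℝ) 2
          norm_num at h2
          linarith
        calc ((q:ℝ)) ^ c ≤ (2 * (n:ℝ)) ^ c :=
              Real.rpow_le_rpow (by positivity) hqle (by linarith)
          _ = (2:ℝ) ^ c * (n:ℝ) ^ c := Real.mul_rpow (by norm_num) (by positivity)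
          _ ≤ 4 * (2:ℝ) ^ ((k:ℝ) * c) := by
              rw [hnc]
              have := Real.rpow_nonneg (le_of_lt two_pos) ((k:ℝ) * c)
              nlinarith
      have hKle := hq q hq1
      rw [hδdef, div_div, div_le_iff₀ (by positivity)]
      nlinarith [mul_le_mul_of_nonneg_right hqcle hnn]
    -- separation within a same-sign class
    have main : ∀ p q : ℕ, p ∈ Finset.Ico n (2*n) → q ∈ Finset.Ico n (2*n) → p < q →
        ((0 ≤ (q:ℝ) * α - round ((q:ℝ) * α)) ↔ (0 ≤ (p:ℝ) * α - round ((p:ℝ) * α))) →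
        δ ≤ |nint ((q:ℝ) * α) - nint ((p:ℝ) * α)| := by
      intro p q hpm hqm hpq hsign
      rw [Finset.mem_Ico] at hpm hqm
      set d : ℕ := q - p with hd
      have hd1 : 1 ≤ d := by omega
      have hdn : d ≤ n := by omega
      have hdlow : δ ≤ nint ((d:ℝ) * α) := by
        have hdc : ((d:ℝ)) ^ c ≤ (2:ℝ) ^ ((k:ℝ) * c) := by
          rw [← hnc]
          exact Real.rpow_le_rpow (by positivity) (by exact_mod_cast hdn) (by linarith)
        have hKle := hq d hd1
        have hnn : 0 ≤ nint ((d:ℝ) * α) := hnintnn _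
        rw [hδdef, div_le_iff₀ h2kc]
        nlinarith [mul_le_mul_of_nonneg_right hdc hnn]
      set x : ℝ := (q:ℝ) * α - round ((q:ℝ) * α) with hx
      set y : ℝ := (p:ℝ) * α - round ((p:ℝ) * α) with hy
      have hdval : ((d:ℝ)) * α = (q:ℝ) * α - (p:ℝ) * α := by
        rw [hd]
        push_cast [Nat.cast_sub hpq.le]
        ring
      have hxy : nint ((d:ℝ) * α) ≤ |x - y| := by
        have h1 : nint ((d:ℝ) * α) ≤ |(d:ℝ) * α - ((round ((q:ℝ)*α) - round ((p:ℝ)*α) : ℤ) : ℝ)| :=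
          round_le _ _
        calc nint ((d:ℝ) * α) ≤ _ := h1
          _ = |x - y| := by rw [hdval, hx, hy]; push_cast; ring_nf
      have habs : |nint ((q:ℝ) * α) - nint ((p:ℝ) * α)| = |x - y| := by
        show |(|x| - |y|)| = |x - y|
        by_cases hxs : 0 ≤ x
        · rw [abs_of_nonneg hxs, abs_of_nonneg (hsign.mp hxs)]
        · have hys : ¬ (0 ≤ y) := fun hy0 => hxs (hsign.mpr hy0)
          push_neg at hxs hys
          rw [abs_of_neg hxs, abs_of_neg hys]
          rw [show -x - -y = -(x - y) by ring, abs_neg]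
      rw [habs]
      exact le_trans hdlow hxy
    -- sum over a same-sign class
    have hclass : ∀ S : Finset ℕ, S ⊆ Finset.Ico n (2*n) →
        (∀ q ∈ S, ∀ p ∈ S, q ≠ p → δ ≤ |nint ((q:ℝ)*α) - nint ((p:ℝ)*α)|) →
        ∑ q ∈ S, 1 / nint ((q:ℝ) * α) ≤ (4/δ) * ((k:ℝ) + 1) := by
      intro S hSB hSsep
      have hcard : S.card ≤ n := by
        have := Finset.card_le_card hSB
        rwa [Nat.card_Ico, Nat.two_mul, Nat.add_sub_cancel] at this
      have h1 := sep_sum (fun q => nint ((q:ℝ) * α)) δ hδ S.card S (δ/4) (by positivity) rfl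
        (fun q hq => hflow q (hSB hq)) hSsep
      calc ∑ q ∈ S, 1 / nint ((q:ℝ) * α)
          ≤ ∑ i ∈ range S.card, 1 / (δ/4 + i * δ) := h1
        _ ≤ ∑ i ∈ range S.card, (4/δ) * (1 / ((i:ℝ) + 1)) := by
            apply Finset.sum_le_sum
            intro i _
            have hi0 : (0:ℝ) ≤ i := Nat.cast_nonneg i
            have heq : (4/δ) * (1 / ((i:ℝ) + 1)) = 1 / (((i:ℝ) + 1) * δ / 4) := by
              field_simp
            rw [heq]
            apply one_div_le_one_div_of_le (by positivity)
            nlinarith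
        _ = (4/δ) * ∑ i ∈ range S.card, 1 / ((i:ℝ) + 1) := (Finset.mul_sum _ _ _).symm
        _ ≤ (4/δ) * ∑ i ∈ range n, 1 / ((i:ℝ) + 1) := by
            apply mul_le_mul_of_nonneg_left _ (by positivity)
            apply Finset.sum_le_sum_of_subset_of_nonneg (Finset.range_subset_range.mpr hcard)
            intro i _ _; positivity
        _ ≤ (4/δ) * ((k:ℝ) + 1) := by
            apply mul_le_mul_of_nonneg_left _ (by positivity)
            rw [hn]; exact harm_le k
    -- split the block by sign
    set P : ℕ → Prop := fun q => 0 ≤ (q:ℝ) * α - round ((q:ℝ) * α) with hP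
    have hBsum : ∑ q ∈ Finset.Ico n (2*n), 1 / nint ((q:ℝ)*α) ≤ (8/δ) * ((k:ℝ)+1) := by
      classical
      rw [← Finset.sum_filter_add_sum_filter_not (Finset.Ico n (2*n)) P]
      have hp := hclass ((Finset.Ico n (2*n)).filter P) (Finset.filter_subset _ _)
        (fun q hqm p hpm hne => by
          rw [Finset.mem_filter] at hqm hpm
          rcases Nat.lt_or_ge p q with hlt | hge
          · exact main p q hpm.1 hqm.1 hlt (iff_of_true hqm.2 hpm.2)
          · have hlt : q < p := by omega
            rw [abs_sub_comm]
            exact main q p hqm.1 hpm.1 hlt (iff_of_true hpm.2 hqm.2))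
      have hm := hclass ((Finset.Ico n (2*n)).filter (fun q => ¬ P q)) (Finset.filter_subset _ _)
        (fun q hqm p hpm hne => by
          rw [Finset.mem_filter] at hqm hpm
          rcases Nat.lt_or_ge p q with hlt | hge
          · exact main p q hpm.1 hqm.1 hlt (iff_of_false hqm.2 hpm.2)
          · have hlt : q < p := by omega
            rw [abs_sub_comm]
            exact main q p hqm.1 hpm.1 hlt (iff_of_false hpm.2 hqm.2))
      have : (8/δ) * ((k:ℝ)+1) = (4/δ) * ((k:ℝ)+1) + (4/δ) * ((k:ℝ)+1) := by ring
      rw [this]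
      exact add_le_add hp hm
    -- put it together
    have hTle : ∑ q ∈ Finset.Ico n (2*n), T q
        ≤ (1/(n:ℝ)^2) * ∑ q ∈ Finset.Ico n (2*n), 1 / nint ((q:ℝ)*α) := by
      rw [Finset.mul_sum]
      apply Finset.sum_le_sum
      intro q hqm
      rw [Finset.mem_Ico] at hqm
      have hq1 : 1 ≤ q := le_trans hn1 hqm.1
      have hν : 0 < nint ((q:ℝ)*α) := lt_of_lt_of_le (by positivity) (hflow q (by rw [Finset.mem_Ico]; exact hqm))
      have hqn : (n:ℝ) ≤ (q:ℝ) := by exact_mod_cast hqm.1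
      rw [hT]
      simp only
      rw [one_div_mul_one_div]
      apply one_div_le_one_div_of_le (by positivity)
      have : (n:ℝ)^2 ≤ (q:ℝ)^2 := by nlinarith
      nlinarith
    have hrk : r ^ k * (n:ℝ)^2 = (2:ℝ) ^ ((k:ℝ) * c) := by
      rw [hr, hncast, ← Real.rpow_natCast ((2:ℝ)^(c-2)) k,
        ← Real.rpow_mul (by norm_num : (0:ℝ) ≤ 2),
        ← Real.rpow_natCast ((2:ℝ)^((k:ℝ))) 2,
        ← Real.rpow_mul (by norm_num : (0:ℝ) ≤ 2),
        ← Real.rpow_add two_pos]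
      congr 1
      push_cast
      ring
    have hfin : (1/(n:ℝ)^2) * ((8/δ) * ((k:ℝ)+1)) = g k := by
      rw [hδdef, hg]
      simp only
      rw [← hrk]
      field_simp
    rw [hIco]
    calc ∑ q ∈ Finset.Ico n (2*n), T q
        ≤ (1/(n:ℝ)^2) * ∑ q ∈ Finset.Ico n (2*n), 1 / nint ((q:ℝ)*α) := hTle
      _ ≤ (1/(n:ℝ)^2) * ((8/δ) * ((k:ℝ)+1)) := by
          apply mul_le_mul_of_nonneg_left hBsum (by positivity)
      _ = g k := hfin
  -- summability of g
  have hgsum : Summable g := by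
    have h1 : Summable (fun k : ℕ => (k:ℝ) * r ^ k) := by
      have := summable_pow_mul_geometric_of_norm_lt_one (R := ℝ) 1
        (r := r) (by rw [Real.norm_eq_abs, abs_of_pos hr0]; exact hr1)
      simpa using this
    have h2 : Summable (fun k : ℕ => r ^ k) := summable_geometric_of_lt_one hr0.le hr1
    have h3 : Summable (fun k : ℕ => ((k:ℝ) + 1) * r ^ k) := by
      simpa [add_mul] using h1.add h2
    simpa [hg, mul_assoc] using h3.mul_left (8/K)
  -- partial sums bounded
  have hbound : ∀ N : ℕ, ∑ m ∈ range N, (1 / (((m:ℝ)+1)^2 * nint (((m:ℝ)+1) * α))) ≤ ∑' k, g k := by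
    intro N
    have hre : ∑ m ∈ range N, (1 / (((m:ℝ)+1)^2 * nint (((m:ℝ)+1) * α)))
        = ∑ q ∈ Finset.Ico 1 (N+1), T q := by
      rw [Finset.sum_Ico_eq_sum_range]
      simp only [Nat.add_sub_cancel]
      apply Finset.sum_congr rfl
      intro i _
      rw [hT]
      simp only
      push_cast
      ring_nf
    rw [hre]
    have hsub : ∑ q ∈ Finset.Ico 1 (N+1), T q ≤ ∑ q ∈ Finset.Ico 1 (2^N), T q := by
      apply Finset.sum_le_sum_of_subset_of_nonneg
      · exact Finset.Ico_subset_Ico le_rfl (Nat.lt_two_pow_self (n := N))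
      · intro q _ _; exact hTnn q
    have hdecomp : ∀ M : ℕ, ∑ q ∈ Finset.Ico 1 (2^M), T q
        = ∑ k ∈ range M, ∑ q ∈ Finset.Ico (2^k) (2^(k+1)), T q := by
      intro M
      induction M with
      | zero => simp
      | succ M ih =>
        rw [Finset.sum_range_succ, ← ih,
          Finset.sum_Ico_consecutive _ (Nat.one_le_two_pow) (Nat.pow_le_pow_right (by norm_num) (Nat.le_succ M))]
    calc ∑ q ∈ Finset.Ico 1 (N+1), T q ≤ ∑ q ∈ Finset.Ico 1 (2^N), T q := hsub
      _ = ∑ k ∈ range N, ∑ q ∈ Finset.Ico (2^k) (2^(k+1)), T q := hdecomp N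
      _ ≤ ∑ k ∈ range N, g k := Finset.sum_le_sum (fun k _ => block k)
      _ ≤ ∑' k, g k := Summable.sum_le_tsum (range N) (fun k _ => hgnn k) hgsum
  exact summable_of_sum_range_le
    (fun m => div_nonneg zero_le_one (mul_nonneg (by positivity) (hnintnn _))) hbound
end

section
/- For every irrational α and every integer N ≥ 0, log P_N(α) = ∑_{m=1}^∞ (1/(2m)) (1 - sin(π(2N+1)mα)/sin(πmα)), where P_N(α) = ∏_{n=1}^N |2 sin(πnα)| (with P_0(α) = 1). -/
open Finset Filter Complex Topology

theorem kern (y : ℝ) (N : ℕ) :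
    Real.sin ((2 * N + 1) * y) =
      Real.sin y * (1 + 2 * ∑ n ∈ range N, Real.cos (2 * (n + 1) * y)) := by
  induction N with
  | zero => simp
  | succ N ih =>
    rw [Finset.sum_range_succ]
    have h := Real.sin_sub_sin ((2 * (N+1) + 1) * y) ((2 * N + 1) * y)
    have e1 : ((2 * (N+1:ℝ) + 1) * y - (2 * N + 1) * y) / 2 = y := by ring
    have e2 : ((2 * (N+1:ℝ) + 1) * y + (2 * N + 1) * y) / 2 = 2 * (N + 1) * y := by ring
    rw [e1, e2] at h
    push_cast
    push_cast at ih
    nlinarith [h, ih]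

theorem absl (θ : ℝ) : ‖1 - Complex.exp (θ * Complex.I)‖ = 2 * |Real.sin (θ / 2)| := by
  rw [Complex.exp_mul_I]
  have h := Complex.sq_norm (1 - (Complex.cos θ + Complex.sin θ * Complex.I))
  have hre : (1 - (Complex.cos θ + Complex.sin θ * Complex.I)).re = 1 - Real.cos θ := by
    simp [Complex.cos_ofReal_re, Complex.sin_ofReal_re]
  have him : (1 - (Complex.cos θ + Complex.sin θ * Complex.I)).im = -Real.sin θ := by
    simp [Complex.cos_ofReal_re, Complex.sin_ofReal_re]
  rw [Complex.normSq_apply, hre, him] at h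
  have h2 : Real.sin (θ/2) ^ 2 = (1 - Real.cos θ) / 2 := by
    have := Real.sin_sq_eq_half_sub (θ/2)
    rw [show 2*(θ/2) = θ by ring] at this
    rw [this]; ring
  have hcos : Real.cos θ ^ 2 + Real.sin θ ^ 2 = 1 := by
    rw [add_comm]; exact Real.sin_sq_add_cos_sq θ
  nlinarith [norm_nonneg (1 - (Complex.cos θ + Complex.sin θ * Complex.I)),
    abs_nonneg (Real.sin (θ/2)), _root_.sq_abs (Real.sin (θ/2)), h,
    mul_self_nonneg (‖1 - (Complex.cos θ + Complex.sin θ * Complex.I)‖ - 2 * |Real.sin (θ/2)|)]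

theorem cxlim {z : ℂ} (hz : ‖z‖ = 1) (h1 : z ≠ 1) :
    Tendsto (fun M : ℕ => ∑ m ∈ range M, z ^ (m + 1) / (m + 1)) atTop
      (𝓝 (-Complex.log (1 - z))) := by
  have hz1 : (1 : ℂ) - z ≠ 0 := by
    intro h; apply h1; linear_combination -h
  -- Step 1: Cauchy sequence via Dirichlet's test
  have hb : ∀ n : ℕ, ‖∑ i ∈ range n, z ^ (i + 1)‖ ≤ 2 / ‖1 - z‖ := by
    intro n
    have hgeom : ∑ i ∈ range n, z ^ (i + 1) = z * ((z ^ n - 1) / (z - 1)) := by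
      rw [← geom_sum_eq h1, Finset.mul_sum]
      exact Finset.sum_congr rfl fun i _ => by rw [pow_succ, mul_comm]
    rw [hgeom, norm_mul, hz, one_mul, norm_div]
    rw [show z - 1 = -(1 - z) by ring, norm_neg]
    apply div_le_div_of_nonneg_right ?_ (by positivity) |>.trans_eq rfl
    calc ‖z ^ n - 1‖ ≤ ‖z ^ n‖ + ‖(1:ℂ)‖ := norm_sub_le _ _
      _ = 2 := by rw [norm_pow, hz]; norm_num
  have hanti : Antitone (fun n : ℕ => ((n : ℝ) + 1)⁻¹) := by
    intro a b hab
    apply inv_anti₀ (by positivity)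
    exact_mod_cast by exact_mod_cast add_le_add_left (Nat.cast_le.mpr hab) 1
  have h0 : Tendsto (fun n : ℕ => ((n : ℝ) + 1)⁻¹) atTop (𝓝 0) :=
    tendsto_one_div_add_atTop_nhds_zero_nat.congr (by intro n; rw [one_div])
  have hc : CauchySeq (fun M : ℕ => ∑ m ∈ range M, (((m:ℝ)+1)⁻¹) • z ^ (m + 1)) :=
    hanti.cauchySeq_series_mul_of_tendsto_zero_of_bounded h0 hb
  have hc' : CauchySeq (fun M : ℕ => ∑ m ∈ range M, z ^ (m + 1) / (m + 1)) := by
    convert hc using 2 with M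
    apply Finset.sum_congr rfl
    intro m _
    rw [real_smul]
    push_cast
    rw [div_eq_inv_mul]
  obtain ⟨l, hl⟩ := cauchySeq_tendsto_of_complete hc'
  -- Step 2: identify the limit via Abel's theorem
  set f : ℕ → ℂ := fun n => z ^ n / n with hf
  have hpartial : Tendsto (fun n : ℕ => ∑ i ∈ range n, f i) atTop (𝓝 l) := by
    rw [show atTop = atTop.map (· + 1) from (map_add_atTop_eq_nat 1).symm, tendsto_map'_iff]
    apply hl.congr
    intro M
    simp only [Function.comp_apply]
    rw [Finset.sum_range_succ']
    simp [hf]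
  have habel := Complex.tendsto_tsum_powerSeries_nhdsWithin_lt hpartial
  rw [tendsto_map'_iff] at habel
  have hlog : Tendsto (fun x : ℝ => ∑' n, f n * (x : ℂ) ^ n) (𝓝[<] (1:ℝ))
      (𝓝 (-Complex.log (1 - z))) := by
    have hcont : Tendsto (fun x : ℝ => -Complex.log (1 - (x : ℂ) * z)) (𝓝[<] (1:ℝ))
        (𝓝 (-Complex.log (1 - z))) := by
      apply Filter.Tendsto.mono_left _ nhdsWithin_le_nhds
      have : ContinuousAt (fun x : ℝ => -Complex.log (1 - (x : ℂ) * z)) 1 := by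
        apply ContinuousAt.neg
        apply ContinuousAt.clog
        · fun_prop
        · rw [Complex.ofReal_one, one_mul]
          rw [Complex.mem_slitPlane_iff]
          left
          simp only [Complex.sub_re, Complex.one_re]
          have hre : z.re ≤ 1 := by
            calc z.re ≤ |z.re| := le_abs_self _
              _ ≤ ‖z‖ := Complex.abs_re_le_norm z
              _ = 1 := hz
          rcases lt_or_eq_of_le hre with h | h
          · linarith
          · exfalso
            apply h1
            have hnsq : Complex.normSq z = 1 := by
              have : ‖z‖ = 1 := hz
              rw [← Complex.sq_norm, this]; norm_num
            have him : z.im = 0 := by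
              rw [Complex.normSq_apply, h] at hnsq
              nlinarith
            exact Complex.ext (by simp [h]) (by simp [him])
      simpa using this.tendsto
    apply hcont.congr'
    filter_upwards [Ioo_mem_nhdsLT_of_mem (by norm_num : (1:ℝ) ∈ Set.Ioc 0 1)] with x hx
    have hxz : ‖(x:ℂ) * z‖ < 1 := by
      rw [norm_mul, hz, mul_one, Complex.norm_real, Real.norm_eq_abs,
        abs_of_pos hx.1]
      exact hx.2
    have := Complex.hasSum_taylorSeries_neg_log hxz
    rw [← this.tsum_eq]
    apply tsum_congr
    intro n
    rw [hf, mul_pow, div_mul_eq_mul_div, mul_comm]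
  have : l = -Complex.log (1 - z) := tendsto_nhds_unique habel hlog
  exact this ▸ hl

theorem coslim (θ : ℝ) (hsin : Real.sin (θ / 2) ≠ 0) :
    Tendsto (fun M : ℕ => ∑ m ∈ range M, Real.cos (((m : ℝ) + 1) * θ) / ((m : ℝ) + 1)) atTop
      (𝓝 (-Real.log (2 * |Real.sin (θ / 2)|))) := by
  set z : ℂ := Complex.exp (θ * Complex.I) with hzdef
  have hnz : ‖z‖ = 1 := by
    rw [hzdef, Complex.norm_exp_ofReal_mul_I]
  have h1 : z ≠ 1 := by
    intro h
    have := absl θ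
    rw [← hzdef, h, sub_self, norm_zero] at this
    have h2 : |Real.sin (θ / 2)| ≠ 0 := abs_ne_zero.mpr hsin
    have h3 : 0 < |Real.sin (θ/2)| := lt_of_le_of_ne (abs_nonneg _) (Ne.symm h2)
    linarith
  have := (Complex.continuous_re.tendsto _).comp (cxlim hnz h1)
  have hre : ∀ M : ℕ, (∑ m ∈ range M, z ^ (m + 1) / (m + 1)).re =
      ∑ m ∈ range M, Real.cos (((m : ℝ) + 1) * θ) / ((m : ℝ) + 1) := by
    intro M
    rw [Complex.re_sum]
    apply Finset.sum_congr rfl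
    intro m _
    have hzpow : z ^ (m + 1) = Complex.exp ((((m : ℝ) + 1) * θ : ℝ) * Complex.I) := by
      rw [hzdef, ← Complex.exp_nat_mul]
      congr 1
      push_cast
      ring
    rw [hzpow]
    have : ((m : ℂ) + 1) = ((((m : ℝ) + 1) : ℝ) : ℂ) := by push_cast; ring
    rw [this, Complex.div_ofReal_re]
    congr 1
    rw [Complex.exp_ofReal_mul_I_re]
  have hlogre : (-Complex.log (1 - z)).re = -Real.log (2 * |Real.sin (θ / 2)|) := by
    rw [Complex.neg_re, Complex.log_re]
    rw [show (1 : ℂ) - z = 1 - Complex.exp (θ * Complex.I) from by rw [hzdef], absl θ]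
  rw [← hlogre]
  apply this.congr
  intro M
  exact hre M

theorem stmt5 (α : ℝ) (hα : Irrational α) (N : ℕ) :
    Filter.Tendsto (fun M : ℕ => ∑ m ∈ Finset.range M,
        (1 / (2 * ((m : ℝ) + 1))) *
          (1 - Real.sin (Real.pi * (2 * (N : ℝ) + 1) * ((m : ℝ) + 1) * α) /
                Real.sin (Real.pi * ((m : ℝ) + 1) * α)))
      Filter.atTop
      (nhds (Real.log (∏ n ∈ Finset.range N, |2 * Real.sin (Real.pi * ((n : ℝ) + 1) * α)|))) := by
  -- sin(π k α) ≠ 0 for positive integer multiples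
  have hs : ∀ k : ℕ, Real.sin (Real.pi * ((k : ℝ) + 1) * α) ≠ 0 := by
    intro k h
    rw [Real.sin_eq_zero_iff] at h
    obtain ⟨j, hj⟩ := h
    refine hα ⟨(j : ℚ) / ((k : ℚ) + 1), ?_⟩
    have hk : ((k : ℝ) + 1) ≠ 0 := by positivity
    have h2 : Real.pi * (((k : ℝ) + 1) * α) = Real.pi * j := by linear_combination -hj
    have h3 : ((k : ℝ) + 1) * α = j := mul_left_cancel₀ Real.pi_ne_zero h2
    push_cast
    rw [div_eq_iff hk]
    linear_combination -h3
  -- rewrite each term via the Dirichlet kernel identity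
  have hterm : ∀ m : ℕ,
      (1 / (2 * ((m : ℝ) + 1))) *
          (1 - Real.sin (Real.pi * (2 * (N : ℝ) + 1) * ((m : ℝ) + 1) * α) /
                Real.sin (Real.pi * ((m : ℝ) + 1) * α)) =
      ∑ n ∈ range N, (-(Real.cos (((m : ℝ) + 1) * (2 * Real.pi * ((n : ℝ) + 1) * α)) / ((m : ℝ) + 1))) := by
    intro m
    have hk := kern (Real.pi * ((m : ℝ) + 1) * α) N
    have harg : ((2 * (N : ℝ) + 1) * (Real.pi * ((m : ℝ) + 1) * α)) =
        Real.pi * (2 * (N : ℝ) + 1) * ((m : ℝ) + 1) * α := by ring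
    rw [harg] at hk
    have hsm := hs m
    rw [hk, mul_comm (Real.sin (Real.pi * ((m : ℝ) + 1) * α)), mul_div_assoc, div_self hsm,
      mul_one]
    rw [show (1:ℝ) - (1 + 2 * ∑ n ∈ range N, Real.cos (2 * ((n:ℝ) + 1) * (Real.pi * ((m : ℝ) + 1) * α)))
        = -2 * ∑ n ∈ range N, Real.cos (2 * ((n:ℝ) + 1) * (Real.pi * ((m : ℝ) + 1) * α)) from by ring]
    rw [Finset.mul_sum, Finset.mul_sum]
    apply Finset.sum_congr rfl
    intro n _
    rw [show 2 * ((n:ℝ) + 1) * (Real.pi * ((m : ℝ) + 1) * α)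
        = ((m : ℝ) + 1) * (2 * Real.pi * ((n : ℝ) + 1) * α) from by ring]
    have hm : (2 * ((m:ℝ) + 1)) ≠ 0 := by positivity
    field_simp
  have hrw : (fun M : ℕ => ∑ m ∈ Finset.range M,
        (1 / (2 * ((m : ℝ) + 1))) *
          (1 - Real.sin (Real.pi * (2 * (N : ℝ) + 1) * ((m : ℝ) + 1) * α) /
                Real.sin (Real.pi * ((m : ℝ) + 1) * α))) =
      fun M : ℕ => ∑ n ∈ range N, ∑ m ∈ range M,
        (-(Real.cos (((m : ℝ) + 1) * (2 * Real.pi * ((n : ℝ) + 1) * α)) / ((m : ℝ) + 1))) := by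
    funext M
    rw [Finset.sum_comm]
    exact Finset.sum_congr rfl fun m _ => hterm m
  rw [hrw]
  have hlogprod : Real.log (∏ n ∈ Finset.range N, |2 * Real.sin (Real.pi * ((n : ℝ) + 1) * α)|)
      = ∑ n ∈ range N, Real.log |2 * Real.sin (Real.pi * ((n : ℝ) + 1) * α)| := by
    apply Real.log_prod
    intro n _
    exact abs_ne_zero.mpr (by
      intro h
      rcases mul_eq_zero.mp h with h | h
      · norm_num at h
      · exact hs n h)
  rw [hlogprod]
  apply tendsto_finset_sum
  intro n _
  have hsin : Real.sin ((2 * Real.pi * ((n : ℝ) + 1) * α) / 2) ≠ 0 := by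
    rw [show (2 * Real.pi * ((n : ℝ) + 1) * α) / 2 = Real.pi * ((n : ℝ) + 1) * α from by ring]
    exact hs n
  have := (coslim (2 * Real.pi * ((n : ℝ) + 1) * α) hsin).neg
  rw [neg_neg] at this
  have heq : Real.log (2 * |Real.sin ((2 * Real.pi * ((n : ℝ) + 1) * α) / 2)|)
      = Real.log |2 * Real.sin (Real.pi * ((n : ℝ) + 1) * α)| := by
    rw [show (2 * Real.pi * ((n : ℝ) + 1) * α) / 2 = Real.pi * ((n : ℝ) + 1) * α from by ring,
      abs_mul]
    norm_num
  rw [heq] at this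
  apply this.congr
  intro M
  rw [← Finset.sum_neg_distrib]
end

section
/- For every irrational α and every integer M ≥ 1, (1/M) ∑_{N=0}^{M-1} log P_N(α) = ∑_{m=1}^∞ (1/(2m)) (1 - sin²(πMmα)/(M sin²(πmα))), where P_N(α) = ∏_{n=1}^N |2 sin(πnα)| and P_0(α) = 1. -/
open Filter Finset

private lemma lemD (x : ℝ) (M : ℕ) :
    2 * Real.sin x * ∑ n ∈ range M, Real.cos (2 * ((n : ℝ) + 1) * x)
      = Real.sin ((2 * (M : ℝ) + 1) * x) - Real.sin x := by
  induction M with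
  | zero => simp
  | succ M ih =>
      rw [sum_range_succ, mul_add, ih]
      push_cast
      have e1 : (2 * ((M : ℝ) + 1) + 1) * x = 2 * ((M : ℝ) + 1) * x + x := by ring
      have e2 : (2 * (M : ℝ) + 1) * x = 2 * ((M : ℝ) + 1) * x - x := by ring
      rw [e1, e2, Real.sin_add, Real.sin_sub]
      ring

private lemma lemT (x : ℝ) (M : ℕ) :
    2 * Real.sin x ^ 2 * ∑ N ∈ range M, ∑ n ∈ range N, Real.cos (2 * ((n : ℝ) + 1) * x)
      = Real.sin ((M : ℝ) * x) ^ 2 - (M : ℝ) * Real.sin x ^ 2 := by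
  induction M with
  | zero => simp
  | succ M ih =>
      rw [sum_range_succ, mul_add, ih]
      have hD : 2 * Real.sin x ^ 2 * ∑ n ∈ range M, Real.cos (2 * ((n : ℝ) + 1) * x)
          = Real.sin x * (Real.sin ((2 * (M : ℝ) + 1) * x) - Real.sin x) := by
        linear_combination Real.sin x * lemD x M
      rw [hD]
      push_cast
      have e1 : ((M : ℝ) + 1) * x = (M : ℝ) * x + x := by ring
      have e2 : (2 * (M : ℝ) + 1) * x = ((M : ℝ) * x + x) + (M : ℝ) * x := by ring
      rw [e1, e2, Real.sin_add, Real.sin_add, Real.cos_add]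
      linear_combination (-(Real.sin ((M : ℝ) * x)) ^ 2) * Real.sin_sq_add_cos_sq x

private lemma keyA (θ : ℝ) (hθ : Irrational θ) :
    Tendsto (fun K : ℕ => ∑ m ∈ range K, Real.cos (2 * Real.pi * ((m : ℝ) + 1) * θ) / ((m : ℝ) + 1))
      atTop (nhds (- Real.log (2 * |Real.sin (Real.pi * θ)|))) := by
  set z : ℂ := Complex.exp ((2 * Real.pi * θ : ℝ) * Complex.I) with hzdef
  have hz1 : z ≠ 1 := by
    intro h
    rw [hzdef, Complex.exp_eq_one_iff] at h
    obtain ⟨n, hn⟩ := h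
    have hpi : (Real.pi : ℂ) ≠ 0 := by
      exact_mod_cast Real.pi_ne_zero
    have h2pi : ((2 : ℂ) * Real.pi) ≠ 0 := by
      simp [Real.pi_ne_zero]
    have h3 : ((2:ℂ) * Real.pi * θ) * Complex.I = ((2:ℂ) * Real.pi * (n:ℂ)) * Complex.I := by
      push_cast at hn
      linear_combination hn
    have h4 := mul_right_cancel₀ Complex.I_ne_zero h3
    have : (θ : ℂ) = (n : ℂ) := by
      apply mul_left_cancel₀ h2pi
      linear_combination h4
    have : θ = (n : ℝ) := by exact_mod_cast this
    exact hθ.ne_int n this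
  have hzn : ‖z‖ = 1 := Complex.norm_exp_ofReal_mul_I _
  -- real and imaginary parts of z
  have hzre : z.re = Real.cos (2 * Real.pi * θ) := Complex.exp_ofReal_mul_I_re _
  have hzim : z.im = Real.sin (2 * Real.pi * θ) := Complex.exp_ofReal_mul_I_im _
  have hcosne : Real.cos (2 * Real.pi * θ) ≠ 1 := by
    intro h
    rw [Real.cos_eq_one_iff] at h
    obtain ⟨n, hn⟩ := h
    apply hθ.ne_int n
    apply mul_left_cancel₀ (show (2 * Real.pi) ≠ 0 from (by positivity : (0:ℝ) < 2 * Real.pi).ne')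
    linarith [hn]
  have hslit : (1 - z) ∈ Complex.slitPlane := by
    left
    simp only [Complex.sub_re, Complex.one_re, hzre]
    have := Real.cos_le_one (2 * Real.pi * θ)
    cases lt_or_eq_of_le this with
    | inl h => linarith
    | inr h => exact absurd h hcosne
  have hzsub : ‖(1 - z)‖ = 2 * |Real.sin (Real.pi * θ)| := by
    have h2 : (‖(1 - z)‖) ^ 2 = (2 * |Real.sin (Real.pi * θ)|) ^ 2 := by
      rw [Complex.sq_norm, Complex.normSq_apply]
      simp only [Complex.sub_re, Complex.sub_im, Complex.one_re, Complex.one_im, hzre, hzim]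
      have e : 2 * Real.pi * θ = 2 * (Real.pi * θ) := by ring
      rw [e, Real.cos_two_mul, Real.sin_two_mul, mul_pow, sq_abs]
      nlinarith [Real.sin_sq_add_cos_sq (Real.pi * θ)]
    exact (pow_left_inj₀ (norm_nonneg _) (by positivity) two_ne_zero).mp h2
  -- Step A: partial sums converge
  have hbound : ∀ n : ℕ, ‖∑ i ∈ range n, z ^ (i + 1)‖ ≤ 2 / ‖(1 - z)‖ := by
    intro n
    have hz1' : z - 1 ≠ 0 := sub_ne_zero.mpr hz1
    have : ∑ i ∈ range n, z ^ (i + 1) = z * ((z ^ n - 1) / (z - 1)) := by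
      rw [← geom_sum_eq hz1]
      rw [Finset.mul_sum]
      exact Finset.sum_congr rfl fun i _ => by ring
    rw [this]
    rw [norm_mul, norm_div]
    have h1 : ‖z‖ = 1 := hzn
    have h2 : ‖z ^ n - 1‖ ≤ 2 := by
      calc ‖z ^ n - 1‖ ≤ ‖z ^ n‖ + ‖(1 : ℂ)‖ := norm_sub_le _ _
      _ = 2 := by rw [norm_pow, h1]; norm_num
    have h3 : ‖z - 1‖ = ‖(1 - z)‖ := by
      rw [← norm_neg]; congr 1; ring
    rw [h1, one_mul, h3]
    have : (0 : ℝ) < ‖(1 - z)‖ := by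
      rw [← h3]
      exact norm_pos_iff.mpr hz1'
    gcongr
  have hcauchy : CauchySeq (fun n : ℕ => ∑ i ∈ range n, z ^ (i + 1) / ((i : ℂ) + 1)) := by
    have hf0 : Tendsto (fun i : ℕ => 1 / ((i : ℝ) + 1)) atTop (nhds 0) :=
      tendsto_one_div_add_atTop_nhds_zero_nat
    have hfa : Antitone (fun i : ℕ => 1 / ((i : ℝ) + 1)) := by
      intro a b hab
      apply one_div_le_one_div_of_le
      · positivity
      · exact_mod_cast by omega
    have := hfa.cauchySeq_series_mul_of_tendsto_zero_of_bounded hf0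
      (z := fun i => z ^ (i + 1)) hbound
    convert this using 2 with n
    apply Finset.sum_congr rfl
    intro i _
    rw [Complex.real_smul]
    push_cast
    rw [div_eq_mul_inv, one_div, mul_comm]
  obtain ⟨l, hl⟩ := cauchySeq_tendsto_of_complete hcauchy
  -- the power series coefficients
  set f : ℕ → ℂ := fun n => z ^ n / n with hf
  have hfsum : Tendsto (fun n : ℕ => ∑ i ∈ range n, f i) atTop (nhds l) := by
    have hshift : ∀ n : ℕ, ∑ i ∈ range (n + 1), f i = ∑ i ∈ range n, z ^ (i + 1) / ((i : ℂ) + 1) := by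
      intro n
      rw [Finset.sum_range_succ']
      simp only [hf]
      rw [Nat.cast_zero, div_zero, add_zero]
      apply Finset.sum_congr rfl
      intro i _
      push_cast
      ring_nf
    rw [← tendsto_add_atTop_iff_nat 1]
    exact hl.congr fun n => (hshift n).symm
  -- Abel's limit theorem
  have habel := Complex.tendsto_tsum_powerSeries_nhdsWithin_lt hfsum
  have habel' : Tendsto (fun r : ℝ => ∑' n, f n * (r : ℂ) ^ n) (nhdsWithin 1 (Set.Iio 1)) (nhds l) :=
    habel.comp tendsto_map
  -- identify with -log(1 - r z)
  have hident : ∀ r : ℝ, r ∈ Set.Ioo (0 : ℝ) 1 → ∑' n, f n * (r : ℂ) ^ n = -Complex.log (1 - r * z) := by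
    intro r hr
    have hnorm : ‖(r : ℂ) * z‖ < 1 := by
      rw [norm_mul, Complex.norm_real]
      rw [hzn, mul_one]
      rw [Real.norm_eq_abs, abs_of_pos hr.1]
      exact hr.2
    have := Complex.hasSum_taylorSeries_neg_log hnorm
    rw [← this.tsum_eq]
    congr 1
    funext n
    simp only [hf]
    rw [mul_pow]
    ring
  have hlog : Tendsto (fun r : ℝ => -Complex.log (1 - r * z)) (nhdsWithin 1 (Set.Iio 1))
      (nhds (-Complex.log (1 - z))) := by
    have hcont : ContinuousAt Complex.log (1 - z) := continuousAt_clog hslit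
    have hlin : Tendsto (fun r : ℝ => 1 - (r : ℂ) * z) (nhdsWithin 1 (Set.Iio 1)) (nhds (1 - z)) := by
      have : Continuous (fun r : ℝ => 1 - (r : ℂ) * z) := by continuity
      have := this.tendsto 1
      simp only [Complex.ofReal_one, one_mul] at this
      exact this.mono_left nhdsWithin_le_nhds
    exact (hcont.tendsto.comp hlin).neg
  have hlval : l = -Complex.log (1 - z) := by
    have h1 : Tendsto (fun r : ℝ => ∑' n, f n * (r : ℂ) ^ n) (nhdsWithin 1 (Set.Iio 1))
        (nhds (-Complex.log (1 - z))) := by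
      apply hlog.congr'
      filter_upwards [Ioo_mem_nhdsLT_of_mem (by norm_num : (1:ℝ) ∈ Set.Ioc (0:ℝ) 1)] with r hr
      exact (hident r hr).symm
    exact tendsto_nhds_unique habel' h1
  rw [hlval] at hl
  -- take real parts
  have hre := (Complex.continuous_re.tendsto _).comp hl
  have hre' : Tendsto (fun n : ℕ => ∑ i ∈ range n, (z ^ (i + 1) / ((i : ℂ) + 1)).re) atTop
      (nhds ((-Complex.log (1 - z)).re)) := by
    refine hre.congr fun n => ?_
    simp [Complex.re_sum]
  have hterm : ∀ i : ℕ, (z ^ (i + 1) / ((i : ℂ) + 1)).re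
      = Real.cos (2 * Real.pi * ((i : ℝ) + 1) * θ) / ((i : ℝ) + 1) := by
    intro i
    have hpow : z ^ (i + 1) = Complex.exp ((2 * Real.pi * ((i : ℝ) + 1) * θ : ℝ) * Complex.I) := by
      rw [hzdef, ← Complex.exp_nat_mul]
      congr 1
      push_cast
      ring
    have hcast : ((i : ℂ) + 1) = ((( i : ℝ) + 1 : ℝ) : ℂ) := by push_cast; ring
    rw [hpow, hcast, Complex.div_ofReal_re, Complex.exp_ofReal_mul_I_re]
  have hval : (-Complex.log (1 - z)).re = -Real.log (2 * |Real.sin (Real.pi * θ)|) := by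
    rw [Complex.neg_re, Complex.log_re, hzsub]
  rw [hval] at hre'
  refine hre'.congr fun n => ?_
  exact Finset.sum_congr rfl fun i _ => hterm i

theorem stmt6 (α : ℝ) (hα : Irrational α) (M : ℕ) (hM : 1 ≤ M) :
    Filter.Tendsto (fun K : ℕ => ∑ m ∈ Finset.range K,
        (1 / (2 * ((m : ℝ) + 1))) *
          (1 - Real.sin (Real.pi * (M : ℝ) * ((m : ℝ) + 1) * α) ^ 2 /
                ((M : ℝ) * Real.sin (Real.pi * ((m : ℝ) + 1) * α) ^ 2)))
      Filter.atTop
      (nhds ((1 / (M : ℝ)) * ∑ N ∈ Finset.range M,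
        Real.log (∏ n ∈ Finset.range N, |2 * Real.sin (Real.pi * ((n : ℝ) + 1) * α)|))) := by
  have hMR : (0:ℝ) < (M:ℝ) := by exact_mod_cast hM
  have hM0 : (M:ℝ) ≠ 0 := hMR.ne'
  have hirr : ∀ m : ℕ, Irrational (((m:ℝ) + 1) * α) := by
    intro m
    have h := hα.natCast_mul (Nat.succ_ne_zero m)
    have e : ((m + 1 : ℕ) : ℝ) * α = ((m:ℝ) + 1) * α := by push_cast; ring
    rwa [e] at h
  have hsin : ∀ m : ℕ, Real.sin (Real.pi * ((m:ℝ) + 1) * α) ≠ 0 := by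
    intro m h
    rw [Real.sin_eq_zero_iff] at h
    obtain ⟨n, hn⟩ := h
    apply (hirr m).ne_int n
    apply mul_left_cancel₀ Real.pi_ne_zero
    linear_combination -hn
  have key : ∀ m : ℕ, (1 / (2 * ((m : ℝ) + 1))) *
          (1 - Real.sin (Real.pi * (M : ℝ) * ((m : ℝ) + 1) * α) ^ 2 /
                ((M : ℝ) * Real.sin (Real.pi * ((m : ℝ) + 1) * α) ^ 2))
      = ∑ N ∈ Finset.range M, ∑ n ∈ Finset.range N,
          (-(1/(M:ℝ))) * (Real.cos (2 * Real.pi * ((n : ℝ) + 1) * (((m:ℝ) + 1) * α)) / ((m:ℝ) + 1)) := by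
    intro m
    set x := Real.pi * (((m:ℝ) + 1) * α) with hx
    clear_value x
    have ex : Real.pi * ((m:ℝ) + 1) * α = x := by rw [hx]; ring
    have hsx : Real.sin x ≠ 0 := ex ▸ hsin m
    have hsx2 : Real.sin x ^ 2 ≠ 0 := pow_ne_zero _ hsx
    have exM : Real.pi * (M:ℝ) * ((m:ℝ) + 1) * α = (M:ℝ) * x := by rw [hx]; ring
    have hm1 : ((m:ℝ) + 1) ≠ 0 := by positivity
    have hS : ∑ N ∈ Finset.range M, ∑ n ∈ Finset.range N, Real.cos (2 * ((n:ℝ) + 1) * x)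
        = (Real.sin ((M:ℝ) * x) ^ 2 - (M:ℝ) * Real.sin x ^ 2) / (2 * Real.sin x ^ 2) := by
      rw [eq_div_iff (by exact mul_ne_zero two_ne_zero hsx2)]
      linear_combination lemT x M
    have ecos : ∀ n : ℕ, Real.cos (2 * Real.pi * ((n : ℝ) + 1) * (((m:ℝ) + 1) * α))
        = Real.cos (2 * ((n:ℝ) + 1) * x) := by
      intro n
      congr 1
      rw [hx]; ring
    calc (1 / (2 * ((m : ℝ) + 1))) *
          (1 - Real.sin (Real.pi * (M : ℝ) * ((m : ℝ) + 1) * α) ^ 2 /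
                ((M : ℝ) * Real.sin (Real.pi * ((m : ℝ) + 1) * α) ^ 2))
        = -(1/((M:ℝ) * ((m:ℝ) + 1)))
            * ((Real.sin ((M:ℝ) * x) ^ 2 - (M:ℝ) * Real.sin x ^ 2) / (2 * Real.sin x ^ 2)) := by
          rw [exM, ex]
          field_simp
          try ring
          try exact Or.inl trivial
      _ = -(1/((M:ℝ) * ((m:ℝ) + 1)))
            * ∑ N ∈ Finset.range M, ∑ n ∈ Finset.range N, Real.cos (2 * ((n:ℝ) + 1) * x) := by
          rw [hS]
      _ = ∑ N ∈ Finset.range M, ∑ n ∈ Finset.range N,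
          (-(1/(M:ℝ))) * (Real.cos (2 * Real.pi * ((n : ℝ) + 1) * (((m:ℝ) + 1) * α)) / ((m:ℝ) + 1)) := by
          rw [Finset.mul_sum]
          refine Finset.sum_congr rfl fun N _ => ?_
          rw [Finset.mul_sum]
          refine Finset.sum_congr rfl fun n _ => ?_
          rw [ecos n]
          field_simp
  have hswap : ∀ K : ℕ, ∑ m ∈ Finset.range K, (1 / (2 * ((m : ℝ) + 1))) *
          (1 - Real.sin (Real.pi * (M : ℝ) * ((m : ℝ) + 1) * α) ^ 2 /
                ((M : ℝ) * Real.sin (Real.pi * ((m : ℝ) + 1) * α) ^ 2))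
      = ∑ N ∈ Finset.range M, ∑ n ∈ Finset.range N, (-(1/(M:ℝ))) *
          (∑ m ∈ Finset.range K, Real.cos (2 * Real.pi * ((m : ℝ) + 1) * (((n:ℝ) + 1) * α)) / ((m:ℝ) + 1)) := by
    intro K
    have e1 : ∑ m ∈ Finset.range K, (1 / (2 * ((m : ℝ) + 1))) *
          (1 - Real.sin (Real.pi * (M : ℝ) * ((m : ℝ) + 1) * α) ^ 2 /
                ((M : ℝ) * Real.sin (Real.pi * ((m : ℝ) + 1) * α) ^ 2))
        = ∑ m ∈ Finset.range K, ∑ N ∈ Finset.range M, ∑ n ∈ Finset.range N,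
          (-(1/(M:ℝ))) * (Real.cos (2 * Real.pi * ((n : ℝ) + 1) * (((m:ℝ) + 1) * α)) / ((m:ℝ) + 1)) :=
      Finset.sum_congr rfl fun m _ => key m
    rw [e1, Finset.sum_comm]
    refine Finset.sum_congr rfl fun N _ => ?_
    rw [Finset.sum_comm]
    refine Finset.sum_congr rfl fun n _ => ?_
    rw [Finset.mul_sum]
    refine Finset.sum_congr rfl fun m _ => ?_
    congr 2
    ring
  have hlim : Filter.Tendsto (fun K : ℕ => ∑ N ∈ Finset.range M, ∑ n ∈ Finset.range N, (-(1/(M:ℝ))) *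
          (∑ m ∈ Finset.range K, Real.cos (2 * Real.pi * ((m : ℝ) + 1) * (((n:ℝ) + 1) * α)) / ((m:ℝ) + 1)))
      Filter.atTop
      (nhds (∑ N ∈ Finset.range M, ∑ n ∈ Finset.range N, (-(1/(M:ℝ))) *
          (-(Real.log (2 * |Real.sin (Real.pi * (((n:ℝ) + 1) * α))|))))) := by
    refine tendsto_finset_sum _ fun N _ => tendsto_finset_sum _ fun n _ => ?_
    exact (keyA (((n:ℝ) + 1) * α) (hirr n)).const_mul _
  have hfin : ∑ N ∈ Finset.range M, ∑ n ∈ Finset.range N, (-(1/(M:ℝ))) *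
          (-(Real.log (2 * |Real.sin (Real.pi * (((n:ℝ) + 1) * α))|)))
      = (1 / (M : ℝ)) * ∑ N ∈ Finset.range M,
        Real.log (∏ n ∈ Finset.range N, |2 * Real.sin (Real.pi * ((n : ℝ) + 1) * α)|) := by
    rw [Finset.mul_sum]
    refine Finset.sum_congr rfl fun N _ => ?_
    rw [Real.log_prod]
    · rw [Finset.mul_sum]
      refine Finset.sum_congr rfl fun n _ => ?_
      have e : |2 * Real.sin (Real.pi * ((n:ℝ) + 1) * α)| = 2 * |Real.sin (Real.pi * (((n:ℝ) + 1) * α))| := by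
        rw [abs_mul, abs_two]
        congr 2
        ring
      rw [e]
      ring
    · intro n _
      exact abs_ne_zero.mpr (mul_ne_zero two_ne_zero (hsin n))
  rw [← hfin]
  exact Filter.Tendsto.congr (fun K => (hswap K).symm) hlim
end

section
/- Let α be a badly approximable irrational, i.e. inf_{q≥1} q‖qα‖ > 0. Then there exist constants 0 < c₁ ≤ c₂ (depending on α) such that for all M ≥ 2, c₁ log M ≤ ∑_{m=1}^M 1/(m² ‖mα‖²) ≤ c₂ log M. -/
open Finset

private lemma nint_nonneg' (x : ℝ) : 0 ≤ nint x := abs_nonneg _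

private lemma nint_le_int (x : ℝ) (z : ℤ) : nint x ≤ |x - (z : ℝ)| := round_le x z

private lemma nint_le_half' (x : ℝ) : nint x ≤ 1 / 2 := abs_sub_round x

/-- ∑_{n<N} 1/(n+1)^2 ≤ 2. -/
private lemma sum_range_inv_sq (N : ℕ) :
    ∑ n ∈ range N, (1:ℝ)/((n:ℝ)+1)^2 ≤ 2 := by
  have h : ∀ N : ℕ, ∑ n ∈ range (N+1), (1:ℝ)/((n:ℝ)+1)^2 ≤ 2 - 1/((N:ℝ)+1) := by
    intro N
    induction N with
    | zero => norm_num
    | succ N ih =>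
      rw [Finset.sum_range_succ]
      have h1 : (0:ℝ) < (N:ℝ)+1 := by positivity
      have h2 : (0:ℝ) < (N:ℝ)+2 := by positivity
      have key : (1:ℝ)/(((N:ℝ)+1)+1)^2 ≤ 1/((N:ℝ)+1) - 1/((N:ℝ)+2) := by
        rw [div_sub_div _ _ (ne_of_gt h1) (ne_of_gt h2)]
        rw [div_le_div_iff₀ (by positivity) (by positivity)]
        ring_nf
        nlinarith [sq_nonneg ((N:ℝ)+1)]
      have hE : (N:ℝ)+1+1 = (N:ℝ)+2 := by ring
      push_cast
      rw [hE] at key ⊢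
      linarith
  cases N with
  | zero => simp
  | succ N =>
    have := h N
    have h2 : (0:ℝ) < 1/((N:ℝ)+1) := by positivity
    linarith

private noncomputable def w2 (n : ℕ) : ℝ := 1/((max 1 n : ℕ):ℝ)^2

private lemma w2_nonneg (n : ℕ) : 0 ≤ w2 n := by
  unfold w2; positivity

private lemma w2_sum (T : Finset ℕ) : ∑ n ∈ T, w2 n ≤ 3 := by
  have hsub : T ⊆ range (T.sup id + 1) := fun n hn =>
    mem_range.mpr (Nat.lt_succ_of_le (le_sup (f := id) hn))
  have h1 : ∑ n ∈ T, w2 n ≤ ∑ n ∈ range (T.sup id + 1), w2 n :=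
    sum_le_sum_of_subset_of_nonneg hsub (fun i _ _ => w2_nonneg i)
  have h2 : ∑ n ∈ range (T.sup id + 1), w2 n
      = (∑ n ∈ range (T.sup id), w2 (n+1)) + w2 0 :=
    Finset.sum_range_succ' _ _
  have h3 : ∀ n : ℕ, w2 (n+1) = (1:ℝ)/((n:ℝ)+1)^2 := by
    intro n
    unfold w2
    rw [max_eq_right (Nat.one_le_iff_ne_zero.mpr (Nat.succ_ne_zero n))]
    push_cast
    ring
  have h4 : w2 0 = 1 := by unfold w2; norm_num
  rw [h2, h4] at h1
  calc ∑ n ∈ T, w2 n ≤ (∑ n ∈ range (T.sup id), w2 (n+1)) + 1 := h1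
    _ = (∑ n ∈ range (T.sup id), (1:ℝ)/((n:ℝ)+1)^2) + 1 := by
        rw [Finset.sum_congr rfl (fun n _ => h3 n)]
    _ ≤ 2 + 1 := by linarith [sum_range_inv_sq (T.sup id)]
    _ = 3 := by norm_num

/-- Sum of w2 over image under the "folding" map on ℤ is at most 6. -/
private lemma zsum (S : Finset ℤ) :
    ∑ k ∈ S, w2 (min |k| (|k + 1|)).toNat ≤ 6 := by
  rw [← Finset.sum_filter_add_sum_filter_not S (fun k => 0 ≤ k)]
  have hpos : ∑ k ∈ S.filter (fun k => 0 ≤ k), w2 (min |k| (|k + 1|)).toNat ≤ 3 := by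
    have heq : ∀ k ∈ S.filter (fun k => 0 ≤ k),
        w2 (min |k| (|k + 1|)).toNat = w2 k.toNat := by
      intro k hk
      have hk0 : 0 ≤ k := (Finset.mem_filter.mp hk).2
      congr 1
      rw [abs_of_nonneg hk0, abs_of_nonneg (by omega : (0:ℤ) ≤ k + 1)]
      omega
    rw [Finset.sum_congr rfl heq]
    have hinj : ∀ x ∈ S.filter (fun k => 0 ≤ k), ∀ y ∈ S.filter (fun k => 0 ≤ k),
        x.toNat = y.toNat → x = y := by
      intro x hx y hy hxy
      have hx0 : 0 ≤ x := (Finset.mem_filter.mp hx).2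
      have hy0 : 0 ≤ y := (Finset.mem_filter.mp hy).2
      omega
    calc ∑ k ∈ S.filter (fun k => 0 ≤ k), w2 k.toNat
        = ∑ n ∈ (S.filter (fun k => 0 ≤ k)).image Int.toNat, w2 n :=
          (Finset.sum_image hinj).symm
      _ ≤ 3 := w2_sum _
  have hneg : ∑ k ∈ S.filter (fun k => ¬ 0 ≤ k), w2 (min |k| (|k + 1|)).toNat ≤ 3 := by
    have heq : ∀ k ∈ S.filter (fun k => ¬ 0 ≤ k),
        w2 (min |k| (|k + 1|)).toNat = w2 (-k-1).toNat := by
      intro k hk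
      have hk0 : ¬ 0 ≤ k := (Finset.mem_filter.mp hk).2
      congr 1
      rw [abs_of_nonpos (by omega : k ≤ 0), abs_of_nonpos (by omega : k + 1 ≤ 0)]
      omega
    rw [Finset.sum_congr rfl heq]
    have hinj : ∀ x ∈ S.filter (fun k => ¬ 0 ≤ k), ∀ y ∈ S.filter (fun k => ¬ 0 ≤ k),
        (-x-1).toNat = (-y-1).toNat → x = y := by
      intro x hx y hy hxy
      have hx0 : ¬ 0 ≤ x := (Finset.mem_filter.mp hx).2
      have hy0 : ¬ 0 ≤ y := (Finset.mem_filter.mp hy).2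
      omega
    calc ∑ k ∈ S.filter (fun k => ¬ 0 ≤ k), w2 (-k-1).toNat
        = ∑ n ∈ (S.filter (fun k => ¬ 0 ≤ k)).image (fun k : ℤ => (-k-1).toNat), w2 n :=
          (Finset.sum_image hinj).symm
      _ ≤ 3 := w2_sum _
  linarith

/-- Separation of signed fractional parts. -/
private lemma sep {K α : ℝ} (hb : ∀ q : ℕ, 1 ≤ q → K ≤ (q : ℝ) * nint (q * α))
    {m n : ℕ} (hnm : n < m) :
    K ≤ ((m:ℝ) - (n:ℝ)) *
      |((m:ℝ)*α - (round ((m:ℝ)*α) : ℤ)) - ((n:ℝ)*α - (round ((n:ℝ)*α) : ℤ))| := by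
  have hd : 1 ≤ m - n := by omega
  have hcast : ((m - n : ℕ) : ℝ) = (m:ℝ) - n := by
    push_cast [Nat.cast_sub hnm.le]; ring
  have h1 := hb (m - n) hd
  have h2 : nint (((m-n:ℕ):ℝ) * α)
      ≤ |((m:ℝ)*α - (round ((m:ℝ)*α) : ℤ)) - ((n:ℝ)*α - (round ((n:ℝ)*α) : ℤ))| := by
    have h := nint_le_int (((m-n:ℕ):ℝ) * α) (round ((m:ℝ)*α) - round ((n:ℝ)*α))
    refine h.trans_eq ?_
    congr 1
    rw [hcast]
    push_cast
    ring
  calc K ≤ ((m-n:ℕ):ℝ) * nint (((m-n:ℕ):ℝ)*α) := h1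
    _ ≤ ((m:ℝ) - n) * |((m:ℝ)*α - (round ((m:ℝ)*α) : ℤ)) - ((n:ℝ)*α - (round ((n:ℝ)*α) : ℤ))| := by
        rw [← hcast]
        exact mul_le_mul_of_nonneg_left h2 (Nat.cast_nonneg _)

/-- Block estimate: the sum over a dyadic block is O(1/K²). -/
private lemma block {K α : ℝ} (hK : 0 < K)
    (hb : ∀ q : ℕ, 1 ≤ q → K ≤ (q : ℝ) * nint (q * α)) (A : ℕ) (hA : 1 ≤ A) :
    ∑ m ∈ Icc A (2*A), 1 / ((m:ℝ)^2 * nint ((m:ℝ)*α)^2) ≤ 24 / K^2 := by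
  have hAR : (0:ℝ) < A := by exact_mod_cast hA
  set θ : ℕ → ℝ := fun m => (m:ℝ)*α - (round ((m:ℝ)*α) : ℤ) with hθ
  set δ : ℝ := K / A with hδ
  have hδ0 : 0 < δ := div_pos hK hAR
  set g : ℕ → ℤ := fun m => ⌊θ m / δ⌋ with hg
  set ψ : ℕ → ℕ := fun m => (min |g m| (|g m + 1|)).toNat with hψ
  have hnintθ : ∀ m : ℕ, nint ((m:ℝ)*α) = |θ m| := by
    intro m
    simp only [hθ, nint]
  have hhalf : K/(2*(A:ℝ)) ≤ δ := by
    rw [hδ, div_le_div_iff₀ (by positivity) hAR]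
    nlinarith
  -- lower bound on nint in the block
  have hnl : ∀ m ∈ Icc A (2*A), K/(2*(A:ℝ)) ≤ nint ((m:ℝ)*α) := by
    intro m hm
    rw [Finset.mem_Icc] at hm
    have hm1 : 1 ≤ m := le_trans hA hm.1
    have hmR : (0:ℝ) < m := by exact_mod_cast hm1
    have h1 := hb m hm1
    have h2 : (m:ℝ) ≤ 2*A := by exact_mod_cast hm.2
    rw [div_le_iff₀ (by positivity)]
    calc K ≤ (m:ℝ) * nint ((m:ℝ)*α) := h1
      _ ≤ (2*A) * nint ((m:ℝ)*α) := by
          exact mul_le_mul_of_nonneg_right h2 (nint_nonneg' _)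
      _ = nint ((m:ℝ)*α) * (2*A) := by ring
  -- pointwise bound
  have hpt : ∀ m ∈ Icc A (2*A),
      1 / ((m:ℝ)^2 * nint ((m:ℝ)*α)^2) ≤ (4/K^2) * w2 (ψ m) := by
    intro m hm
    have hnlm := hnl m hm
    rw [Finset.mem_Icc] at hm
    have hAm : (A:ℝ) ≤ m := by exact_mod_cast hm.1
    have hnint_pos : 0 < nint ((m:ℝ)*α) := lt_of_lt_of_le (by positivity) hnlm
    -- key: cast of max 1 (ψ m) times K/(2A) is at most nint(mα)
    have hkey : ((max 1 (ψ m) : ℕ) : ℝ) * (K/(2*(A:ℝ))) ≤ nint ((m:ℝ)*α) := by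
      have hfl : (g m : ℝ) ≤ θ m / δ := Int.floor_le _
      have hfu : θ m / δ < (g m : ℝ) + 1 := Int.lt_floor_add_one _
      rcases le_or_gt 1 (g m) with h1 | h1
      · -- g m ≥ 1 : θ m ≥ g m * δ > 0
        have hψm : (ψ m : ℤ) = g m := by
          simp only [hψ]
          rw [abs_of_nonneg (by omega : (0:ℤ) ≤ g m),
            abs_of_nonneg (by omega : (0:ℤ) ≤ g m + 1)]
          omega
        have hmax : max 1 (ψ m) = ψ m := max_eq_right (by
          have h : (1:ℤ) ≤ (ψ m : ℤ) := hψm ▸ h1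
          exact_mod_cast h)
        have hgR : (1:ℝ) ≤ (g m : ℝ) := by exact_mod_cast h1
        have hθl : (g m : ℝ) * δ ≤ θ m := (le_div_iff₀ hδ0).mp hfl
        have hθpos : 0 < θ m := lt_of_lt_of_le (by nlinarith) hθl
        rw [hnintθ, abs_of_pos hθpos, hmax]
        have hc : ((ψ m : ℕ) : ℝ) = (g m : ℝ) := by exact_mod_cast hψm
        rw [hc]
        calc (g m : ℝ) * (K/(2*A)) ≤ (g m : ℝ) * δ :=
              mul_le_mul_of_nonneg_left hhalf (by linarith)
          _ ≤ θ m := hθl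
      · rcases le_or_gt (g m) (-2) with h2 | h2
        · -- g m ≤ -2 : θ m < (g m + 1) δ ≤ -δ
          have hψm : (ψ m : ℤ) = -(g m + 1) := by
            simp only [hψ]
            rw [abs_of_nonpos (by omega : g m ≤ 0),
              abs_of_nonpos (by omega : g m + 1 ≤ 0)]
            omega
          have hψ1 : 1 ≤ (ψ m : ℤ) := by omega
          have hmax : max 1 (ψ m) = ψ m := max_eq_right (by exact_mod_cast hψ1)
          have hθu : θ m < ((g m : ℝ) + 1) * δ := (div_lt_iff₀ hδ0).mp hfu
          have hg1R : (g m : ℝ) + 1 ≤ -1 := by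
            have h : g m + 1 ≤ -1 := by omega
            exact_mod_cast h
          have hθneg : θ m < 0 := lt_of_lt_of_le hθu (by nlinarith)
          rw [hnintθ, abs_of_neg hθneg, hmax]
          have hc : ((ψ m : ℕ) : ℝ) = -((g m : ℝ) + 1) := by
            have h := hψm
            exact_mod_cast h
          rw [hc]
          calc -((g m : ℝ) + 1) * (K/(2*A)) ≤ -((g m : ℝ) + 1) * δ :=
                mul_le_mul_of_nonneg_left hhalf (by linarith)
            _ ≤ -θ m := by nlinarith
        · -- g m = 0 or -1
          have hψm : ψ m = 0 := by
            have h0 : g m = 0 ∨ g m = -1 := by omega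
            simp only [hψ]
            rcases h0 with h | h <;> simp [h]
          rw [hψm]
          simpa using hnlm
    -- now conclude the pointwise inequality
    have hMψ : (0:ℝ) < ((max 1 (ψ m) : ℕ) : ℝ) := by
      have h : 1 ≤ max 1 (ψ m) := le_max_left _ _
      exact_mod_cast h
    have hrhs : (4/K^2) * w2 (ψ m)
        = 1 / ((A:ℝ)^2 * (((max 1 (ψ m) : ℕ) : ℝ) * (K/(2*(A:ℝ))))^2) := by
      unfold w2
      field_simp
      ring
    rw [hrhs]
    apply one_div_le_one_div_of_le
    · positivity
    · have h1 : (A:ℝ)^2 ≤ (m:ℝ)^2 := by nlinarith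
      have h2 : (((max 1 (ψ m) : ℕ) : ℝ) * (K/(2*(A:ℝ))))^2 ≤ nint ((m:ℝ)*α)^2 :=
        pow_le_pow_left₀ (by positivity) hkey 2
      exact mul_le_mul h1 h2 (by positivity) (by positivity)
  -- injectivity of g on the block
  have hinj : ∀ x ∈ Icc A (2*A), ∀ y ∈ Icc A (2*A), g x = g y → x = y := by
    have key : ∀ x ∈ Icc A (2*A), ∀ y ∈ Icc A (2*A), y < x → g x ≠ g y := by
      intro x hx y hy hyx hgxy
      rw [Finset.mem_Icc] at hx hy
      have hsep := sep hb hyx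
      have hd : |θ x - θ y| < δ := by
        have h1 : |θ x / δ - θ y / δ| < 1 := Int.abs_sub_lt_one_of_floor_eq_floor hgxy
        have h2 : θ x / δ - θ y / δ = (θ x - θ y)/δ := by ring
        rw [h2, abs_div, abs_of_pos hδ0, div_lt_one hδ0] at h1
        exact h1
      have hxy : (x:ℝ) - y ≤ A := by
        have h1 : (x:ℝ) ≤ 2*A := by exact_mod_cast hx.2
        have h2 : (A:ℝ) ≤ y := by exact_mod_cast hy.1
        linarith
      have habs : (0:ℝ) ≤ |θ x - θ y| := abs_nonneg _
      have hK' : K ≤ ((x:ℝ) - y) * |θ x - θ y| := hsep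
      have hxy1 : (1:ℝ) ≤ (x:ℝ) - y := by
        have h : y + 1 ≤ x := hyx
        have : ((y:ℝ)) + 1 ≤ x := by exact_mod_cast h
        linarith
      have h5 : ((x:ℝ)-y) * |θ x - θ y| < ((x:ℝ)-y) * δ :=
        mul_lt_mul_of_pos_left hd (by linarith)
      have h6 : ((x:ℝ)-y) * δ ≤ (A:ℝ) * δ := mul_le_mul_of_nonneg_right hxy (le_of_lt hδ0)
      have h7 : (A:ℝ) * δ = K := by rw [hδ]; field_simp
      linarith
    intro x hx y hy hxy
    rcases Nat.lt_trichotomy x y with h | h | h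
    · exact absurd hxy.symm (key y hy x hx h)
    · exact h
    · exact absurd hxy (key x hx y hy h)
  -- put it together
  calc ∑ m ∈ Icc A (2*A), 1 / ((m:ℝ)^2 * nint ((m:ℝ)*α)^2)
      ≤ ∑ m ∈ Icc A (2*A), (4/K^2) * w2 (ψ m) := Finset.sum_le_sum hpt
    _ = (4/K^2) * ∑ m ∈ Icc A (2*A), w2 ((fun k : ℤ => (min |k| (|k + 1|)).toNat) (g m)) := by
        rw [← Finset.mul_sum]
    _ = (4/K^2) * ∑ k ∈ (Icc A (2*A)).image g,
          w2 ((fun k : ℤ => (min |k| (|k + 1|)).toNat) k) := by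
        rw [Finset.sum_image hinj]
    _ ≤ (4/K^2) * 6 := by
        apply mul_le_mul_of_nonneg_left (zsum _) (by positivity)
    _ = 24 / K^2 := by ring

private lemma upper_ind {K α : ℝ} (hK : 0 < K)
    (hb : ∀ q : ℕ, 1 ≤ q → K ≤ (q : ℝ) * nint (q * α)) :
    ∀ J : ℕ, ∑ m ∈ Ioc (0:ℕ) (2^(J+1) - 1), 1 / ((m:ℝ)^2 * nint ((m:ℝ)*α)^2)
      ≤ ((J:ℝ)+1) * (24/K^2) := by
  intro J
  induction J with
  | zero =>
    have hsub : Ioc (0:ℕ) (2^(0+1) - 1) ⊆ Icc 1 (2*1) := by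
      intro m hm; rw [Finset.mem_Ioc] at hm; rw [Finset.mem_Icc]; omega
    calc ∑ m ∈ Ioc (0:ℕ) (2^(0+1)-1), 1 / ((m:ℝ)^2 * nint ((m:ℝ)*α)^2)
        ≤ ∑ m ∈ Icc (1:ℕ) (2*1), 1 / ((m:ℝ)^2 * nint ((m:ℝ)*α)^2) :=
          sum_le_sum_of_subset_of_nonneg hsub (fun i _ _ => by positivity)
      _ ≤ 24/K^2 := block hK hb 1 le_rfl
      _ = ((0:ℕ)+1) * (24/K^2) := by norm_num
  | succ J ih =>
    have h1 : (0:ℕ) ≤ 2^(J+1) - 1 := Nat.zero_le _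
    have hpow : (2:ℕ)^(J+1+1) = 2*2^(J+1) := by ring
    have hp1 : 0 < (2:ℕ)^(J+1) := Nat.pow_pos (by norm_num)
    have h2 : (2:ℕ)^(J+1) - 1 ≤ 2^(J+1+1) - 1 := by omega
    rw [← Finset.sum_Ioc_consecutive _ h1 h2]
    have hsub : Ioc ((2:ℕ)^(J+1)-1) (2^(J+1+1)-1) ⊆ Icc (2^(J+1)) (2*2^(J+1)) := by
      intro m hm; rw [Finset.mem_Ioc] at hm; rw [Finset.mem_Icc]; omega
    have hblk : ∑ m ∈ Ioc ((2:ℕ)^(J+1)-1) (2^(J+1+1)-1), 1 / ((m:ℝ)^2 * nint ((m:ℝ)*α)^2)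
        ≤ 24/K^2 := by
      calc ∑ m ∈ Ioc ((2:ℕ)^(J+1)-1) (2^(J+1+1)-1), 1 / ((m:ℝ)^2 * nint ((m:ℝ)*α)^2)
          ≤ ∑ m ∈ Icc ((2:ℕ)^(J+1)) (2*2^(J+1)), 1 / ((m:ℝ)^2 * nint ((m:ℝ)*α)^2) :=
            sum_le_sum_of_subset_of_nonneg hsub (fun i _ _ => by positivity)
        _ ≤ 24/K^2 := block hK hb (2^(J+1)) (Nat.one_le_two_pow)
    push_cast
    push_cast at ih
    linarith

set_option maxHeartbeats 2000000 in
theorem stmt10 (α : ℝ) (hα : Irrational α)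
    (hbad : ∃ K > 0, ∀ q : ℕ, 1 ≤ q → K ≤ (q : ℝ) * nint (q * α)) :
    ∃ c₁ c₂ : ℝ, 0 < c₁ ∧ c₁ ≤ c₂ ∧ ∀ M : ℕ, 2 ≤ M →
      c₁ * Real.log M ≤ ∑ m ∈ Finset.Icc 1 M, 1 / ((m : ℝ) ^ 2 * nint (m * α) ^ 2) ∧
      ∑ m ∈ Finset.Icc 1 M, 1 / ((m : ℝ) ^ 2 * nint (m * α) ^ 2) ≤ c₂ * Real.log M := by
  classical
  obtain ⟨K, hK, hb⟩ := hbad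
  have hlog2 : 0 < Real.log 2 := Real.log_pos (by norm_num)
  -- choose s with 2 ≤ K * 2^s
  obtain ⟨s0, hs0⟩ := pow_unbounded_of_one_lt (R := ℝ) (2/K) one_lt_two
  set s : ℕ := max s0 1 with hs
  have hs1 : 1 ≤ s := le_max_right _ _
  have hsR : (1:ℝ) ≤ (s:ℝ) := by exact_mod_cast hs1
  have hs2 : 2 ≤ K * 2^s := by
    have h2 : (2:ℝ)^s0 ≤ 2^s := pow_le_pow_right₀ one_le_two (le_max_left _ _)
    have h3 : 2/K < 2^s := lt_of_lt_of_le hs0 h2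
    rw [div_lt_iff₀ hK] at h3
    linarith
  set c₁ : ℝ := 1/(2*(s:ℝ)*Real.log 2) with hc₁
  set c₂' : ℝ := 48/(K^2*Real.log 2) with hc₂'
  have hc₁pos : 0 < c₁ := by rw [hc₁]; positivity
  refine ⟨c₁, max c₂' c₁, hc₁pos, le_max_right _ _, ?_⟩
  intro M hM
  have hM1 : 1 ≤ M := by omega
  have hMR : (2:ℝ) ≤ M := by exact_mod_cast hM
  have hlogM : 0 < Real.log M := Real.log_pos (by linarith)
  set L := Nat.log 2 M with hL
  have hL1 : 2^L ≤ M := Nat.pow_log_le_self 2 (by omega)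
  have hL2 : M < 2^(L+1) := Nat.lt_pow_succ_log_self (by norm_num) M
  have hnintpos : ∀ m : ℕ, 1 ≤ m → 0 < nint ((m:ℝ)*α) := by
    intro m hm
    have h := hb m hm
    have hmR : (0:ℝ) < m := by exact_mod_cast hm
    nlinarith [nint_nonneg' ((m:ℝ)*α)]
  have hfnn : ∀ m : ℕ, 0 ≤ 1 / ((m:ℝ)^2 * nint ((m:ℝ)*α)^2) := by
    intro m
    apply one_div_nonneg.mpr
    positivity
  constructor
  · -- LOWER BOUND
    have hsum4 : 4 ≤ ∑ m ∈ Finset.Icc 1 M, 1 / ((m:ℝ)^2 * nint ((m:ℝ)*α)^2) := by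
      have h1m : (1:ℕ) ∈ Finset.Icc 1 M := Finset.mem_Icc.mpr ⟨le_rfl, hM1⟩
      have hf1 : 4 ≤ 1 / (((1:ℕ):ℝ)^2 * nint (((1:ℕ):ℝ)*α)^2) := by
        have hp := hnintpos 1 le_rfl
        have hh : nint (((1:ℕ):ℝ)*α) ≤ 1/2 := nint_le_half' _
        rw [Nat.cast_one, one_pow, one_mul]
        rw [Nat.cast_one] at hp hh
        rw [le_div_iff₀ (by positivity)]
        nlinarith
      exact le_trans hf1 (Finset.single_le_sum (fun i _ => hfnn i) h1m)
    -- construct the special q's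
    have hex : ∀ i : ℕ, ∃ k : ℕ, 1 ≤ k ∧ k ≤ 2^(s*(i+1)) ∧
        (K * 2^(s*(i+1)) < (k:ℝ)) ∧ 1 ≤ 1 / ((k:ℝ)^2 * nint ((k:ℝ)*α)^2) := by
      intro i
      have hnpos : 0 < 2^(s*(i+1)) := Nat.pow_pos (by norm_num)
      obtain ⟨k, hk0, hkn, hkd⟩ := Real.exists_nat_abs_mul_sub_round_le α hnpos
      have hnR : ((2^(s*(i+1)) : ℕ) : ℝ) = (2:ℝ)^(s*(i+1)) := by push_cast; ring
      have hnint : nint ((k:ℝ)*α) ≤ 1/((2:ℝ)^(s*(i+1))+1) := by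
        rw [← hnR]
        exact hkd
      have hnRpos : (0:ℝ) < (2:ℝ)^(s*(i+1)) := by positivity
      have hbk := hb k hk0
      have hkR : (0:ℝ) < k := by exact_mod_cast hk0
      have hknR : (k:ℝ) ≤ (2:ℝ)^(s*(i+1)) := by
        rw [← hnR]; exact_mod_cast hkn
      have hnp := hnintpos k hk0
      have hKn : K * 2^(s*(i+1)) < (k:ℝ) := by
        have h2 : K ≤ (k:ℝ) * (1/((2:ℝ)^(s*(i+1))+1)) :=
          le_trans hbk (mul_le_mul_of_nonneg_left hnint (le_of_lt hkR))
        rw [mul_one_div, le_div_iff₀ (by positivity)] at h2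
        nlinarith
      have hterm : 1 ≤ 1 / ((k:ℝ)^2 * nint ((k:ℝ)*α)^2) := by
        have hq1 : (k:ℝ) * nint ((k:ℝ)*α) ≤ 1 := by
          calc (k:ℝ) * nint ((k:ℝ)*α) ≤ (2:ℝ)^(s*(i+1)) * (1/((2:ℝ)^(s*(i+1))+1)) :=
                mul_le_mul hknR hnint (nint_nonneg' _) (le_of_lt hnRpos)
            _ ≤ 1 := by
                rw [mul_one_div, div_le_one (by positivity)]
                linarith
        rw [le_div_iff₀ (by positivity)]
        nlinarith
      exact ⟨k, hk0, hkn, hKn, hterm⟩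
    choose q hq1 hq2 hq3 hq4 using hex
    have hmono : StrictMono q := by
      apply strictMono_nat_of_lt_succ
      intro i
      have h1 : (q i : ℝ) ≤ (2:ℝ)^(s*(i+1)) := by
        have := hq2 i
        calc (q i : ℝ) ≤ ((2^(s*(i+1)) : ℕ) : ℝ) := by exact_mod_cast this
          _ = (2:ℝ)^(s*(i+1)) := by push_cast; ring
      have h2 : K * 2^(s*(i+2)) < (q (i+1) : ℝ) := hq3 (i+1)
      have h3 : (2:ℝ)^(s*(i+2)) = 2^(s*(i+1)) * 2^s := by
        rw [show s*(i+2) = s*(i+1)+s by ring, pow_add]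
      have h4 : (0:ℝ) < (2:ℝ)^(s*(i+1)) := by positivity
      have h5 : 2 * (2:ℝ)^(s*(i+1)) ≤ K * 2^(s*(i+2)) := by
        have h6 := mul_le_mul_of_nonneg_right hs2 h4.le
        have h7 : K*((2:ℝ)^(s*(i+1)) * 2^s) = K*2^s*2^(s*(i+1)) := by ring
        rw [h3, h7]
        exact h6
      have h8 : (q i : ℝ) < (q (i+1) : ℝ) := by linarith
      exact_mod_cast h8
    set T := L / s with hT
    have hsumT : (T:ℝ) ≤ ∑ m ∈ Finset.Icc 1 M, 1 / ((m:ℝ)^2 * nint ((m:ℝ)*α)^2) := by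
      have himg : ∀ i ∈ Finset.range T, q i ∈ Finset.Icc 1 M := by
        intro i hi
        rw [Finset.mem_range] at hi
        rw [Finset.mem_Icc]
        refine ⟨hq1 i, ?_⟩
        have h1 : s*(i+1) ≤ s*T := Nat.mul_le_mul le_rfl (Nat.succ_le_of_lt hi)
        have h2 : s*T ≤ L := by
          rw [hT, mul_comm]
          exact Nat.div_mul_le_self L s
        calc q i ≤ 2^(s*(i+1)) := hq2 i
          _ ≤ 2^L := Nat.pow_le_pow_right (by norm_num) (le_trans h1 h2)
          _ ≤ M := hL1
      calc (T:ℝ) = ∑ _i ∈ Finset.range T, (1:ℝ) := by simp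
        _ ≤ ∑ i ∈ Finset.range T, 1 / ((q i:ℝ)^2 * nint ((q i:ℝ)*α)^2) :=
            Finset.sum_le_sum (fun i _ => hq4 i)
        _ = ∑ m ∈ (Finset.range T).image q, 1 / ((m:ℝ)^2 * nint ((m:ℝ)*α)^2) :=
            (Finset.sum_image (f := fun m : ℕ => 1 / ((m:ℝ)^2 * nint ((m:ℝ)*α)^2)) (g := q)
              (fun x _ y _ h => hmono.injective h)).symm
        _ ≤ ∑ m ∈ Finset.Icc 1 M, 1 / ((m:ℝ)^2 * nint ((m:ℝ)*α)^2) :=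
            Finset.sum_le_sum_of_subset_of_nonneg
              (Finset.image_subset_iff.mpr himg) (fun i _ _ => hfnn i)
    -- conclude lower bound
    have hlogM2 : Real.log M ≤ ((L:ℝ)+1) * Real.log 2 := by
      have hM2 : (M:ℝ) ≤ (2:ℝ)^(L+1) := by
        have := hL2.le
        calc (M:ℝ) ≤ ((2^(L+1) : ℕ) : ℝ) := by exact_mod_cast this
          _ = (2:ℝ)^(L+1) := by push_cast; ring
      calc Real.log M ≤ Real.log ((2:ℝ)^(L+1)) := Real.log_le_log (by linarith) hM2
        _ = ((L:ℝ)+1) * Real.log 2 := by rw [Real.log_pow]; push_cast; ring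
    have hkey : ((L:ℝ)+1)/(2*(s:ℝ)) ≤ ∑ m ∈ Finset.Icc 1 M, 1 / ((m:ℝ)^2 * nint ((m:ℝ)*α)^2) := by
      have hdm := Nat.div_add_mod L s
      have hmod := Nat.mod_lt L (show 0 < s by omega)
      rcases Nat.eq_zero_or_pos T with h0 | h1
      · have hLs : L < s := by
          by_contra hcon
          push_neg at hcon
          have h9 : 1 ≤ L / s := (Nat.one_le_div_iff (by omega)).mpr hcon
          rw [hT] at h0
          exact absurd h0 (Nat.pos_iff_ne_zero.mp h9)
        have : ((L:ℝ)+1) ≤ (s:ℝ) := by exact_mod_cast Nat.succ_le_of_lt hLs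
        have h2 : ((L:ℝ)+1)/(2*(s:ℝ)) ≤ 1 := by
          rw [div_le_one (by positivity)]
          linarith
        linarith
      · have hTR : (1:ℝ) ≤ (T:ℝ) := by exact_mod_cast h1
        have hL3 : (L:ℝ)+1 ≤ (s:ℝ)*T + s := by
          have e1 : L + 1 = s*(L/s) + L%s + 1 := by rw [hdm]
          have h2 : L + 1 ≤ s*T + s := by
            rw [hT]
            calc L + 1 = s*(L/s) + L%s + 1 := e1
              _ = s*(L/s) + (L%s + 1) := by rw [Nat.add_assoc]
              _ ≤ s*(L/s) + s := Nat.add_le_add_left (Nat.succ_le_of_lt hmod) _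
          exact_mod_cast h2
        have h3 : ((L:ℝ)+1)/(2*(s:ℝ)) ≤ (T:ℝ) := by
          rw [div_le_iff₀ (by positivity)]
          nlinarith
        linarith
    calc c₁ * Real.log M ≤ c₁ * (((L:ℝ)+1) * Real.log 2) :=
          mul_le_mul_of_nonneg_left hlogM2 (le_of_lt hc₁pos)
      _ = ((L:ℝ)+1)/(2*(s:ℝ)) := by
          rw [hc₁]
          field_simp
      _ ≤ _ := hkey
  · -- UPPER BOUND
    have h1 : ∑ m ∈ Finset.Icc 1 M, 1 / ((m:ℝ)^2 * nint ((m:ℝ)*α)^2)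
        ≤ ∑ m ∈ Finset.Ioc (0:ℕ) (2^(L+1)-1), 1 / ((m:ℝ)^2 * nint ((m:ℝ)*α)^2) := by
      apply Finset.sum_le_sum_of_subset_of_nonneg
      · intro m hm
        rw [Finset.mem_Icc] at hm
        rw [Finset.mem_Ioc]
        omega
      · exact fun i _ _ => hfnn i
    have h2 := upper_ind hK hb L
    have hL4 : ((L:ℝ)+1) ≤ 2 * Real.log M / Real.log 2 := by
      have hLlog : (L:ℝ) * Real.log 2 ≤ Real.log M := by
        have hM2 : (2:ℝ)^L ≤ (M:ℝ) := by
          calc ((2:ℝ))^L = ((2^L : ℕ) : ℝ) := by push_cast; ring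
            _ ≤ (M:ℝ) := by exact_mod_cast hL1
        calc (L:ℝ) * Real.log 2 = Real.log ((2:ℝ)^L) := by rw [Real.log_pow]
          _ ≤ Real.log M := Real.log_le_log (by positivity) hM2
      have hone : Real.log 2 ≤ Real.log M := by
        apply Real.log_le_log (by norm_num) hMR
      rw [le_div_iff₀ hlog2]
      nlinarith
    calc ∑ m ∈ Finset.Icc 1 M, 1 / ((m:ℝ)^2 * nint ((m:ℝ)*α)^2)
        ≤ ((L:ℝ)+1) * (24/K^2) := le_trans h1 h2
      _ ≤ (2 * Real.log M / Real.log 2) * (24/K^2) := by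
          apply mul_le_mul_of_nonneg_right hL4 (by positivity)
      _ = c₂' * Real.log M := by
          rw [hc₂']
          field_simp
          ring
      _ ≤ (max c₂' c₁) * Real.log M :=
          mul_le_mul_of_nonneg_right (le_max_left _ _) (le_of_lt hlogM)
end

section
/- Let α be a quadratic irrational with continued fraction expansion α = [a₀; a₁, a₂, …] (eventually periodic) and convergent denominators q_k. Then the limit E(α) = lim_{k→∞} (1/(12 log q_k)) ∑_{ℓ=1}^k (-1)^ℓ a_ℓ exists. In particular E((1+√5)/2) = 0. -/
open Filter Finset

private lemma stmt17_log_lip {u v : ℝ} (hu : 1 ≤ u) (hv : 1 ≤ v) :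
    |Real.log u - Real.log v| ≤ |u - v| := by
  wlog h : v ≤ u generalizing u v
  · rw [abs_sub_comm, abs_sub_comm u v]; exact this hv hu (le_of_not_ge h)
  have hv0 : (0:ℝ) < v := lt_of_lt_of_le one_pos hv
  have hu0 : (0:ℝ) < u := lt_of_lt_of_le one_pos hu
  rw [abs_of_nonneg (sub_nonneg.2 (Real.log_le_log hv0 h)),
    abs_of_nonneg (sub_nonneg.2 h)]
  have h1 : Real.log u - Real.log v = Real.log (u / v) :=
    (Real.log_div (ne_of_gt hu0) (ne_of_gt hv0)).symm
  rw [h1]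
  have h2 : Real.log (u / v) ≤ u / v - 1 := Real.log_le_sub_one_of_pos (by positivity)
  have h3 : u / v - 1 = (u - v) / v := by field_simp
  have h4 : (u - v) / v ≤ u - v := div_le_self (by linarith) hv
  linarith

private lemma stmt17_residues {u : ℕ → ℝ} {l : ℝ} {P : ℕ} (hP : 1 ≤ P)
    (h : ∀ r < P, Tendsto (fun n : ℕ => u (n * P + r)) atTop (nhds l)) :
    Tendsto u atTop (nhds l) := by
  rw [Metric.tendsto_atTop]
  intro ε hε
  have H : ∀ r : ℕ, ∃ N : ℕ, r < P → ∀ n ≥ N, dist (u (n * P + r)) l < ε := by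
    intro r
    by_cases hr : r < P
    · obtain ⟨N, hN⟩ := (Metric.tendsto_atTop.1 (h r hr)) ε hε
      exact ⟨N, fun _ => hN⟩
    · exact ⟨0, fun h' => absurd h' hr⟩
  choose Nf hNf using H
  refine ⟨(Finset.sup (Finset.range P) Nf + 1) * P, fun k hk => ?_⟩
  have hr : k % P < P := Nat.mod_lt _ hP
  have hk' : Nf (k % P) ≤ k / P := by
    have h1 : Finset.sup (Finset.range P) Nf + 1 ≤ k / P :=
      (Nat.le_div_iff_mul_le (by omega)).2 hk
    have h2 : Nf (k % P) ≤ Finset.sup (Finset.range P) Nf :=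
      Finset.le_sup (Finset.mem_range.2 hr)
    omega
  have hres := hNf (k % P) hr (k / P) hk'
  have heq : k / P * P + k % P = k := Nat.div_add_mod' k P
  rwa [heq] at hres

private lemma stmt17_shift {u : ℕ → ℝ} {P : ℕ} (hP : 1 ≤ P) {γ : ℝ}
    (h : Tendsto (fun k : ℕ => u (k + P) - u k) atTop (nhds γ)) :
    Tendsto (fun k : ℕ => u k / k) atTop (nhds (γ / P)) := by
  apply stmt17_residues hP
  intro r hr
  set v : ℕ → ℝ := fun n => u (n * P + r) with hv
  have hcomp : Tendsto (fun n : ℕ => n * P + r) atTop atTop := by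
    apply tendsto_atTop_mono (fun n => ?_) tendsto_id
    calc (n:ℕ) = n * 1 := (mul_one n).symm
    _ ≤ n * P := Nat.mul_le_mul_left n hP
    _ ≤ n * P + r := Nat.le_add_right _ _
  have hvd : Tendsto (fun n : ℕ => v (n + 1) - v n) atTop (nhds γ) := by
    have heq : (fun n : ℕ => v (n+1) - v n)
        = (fun k => u (k + P) - u k) ∘ (fun n : ℕ => n * P + r) := by
      funext n
      have : (n + 1) * P + r = n * P + r + P := by ring
      simp only [hv, Function.comp, this]
    rw [heq]
    exact h.comp hcomp
  have hces := hvd.cesaro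
  have hsum : ∀ n, ∑ i ∈ Finset.range n, (v (i+1) - v i) = v n - v 0 :=
    fun n => Finset.sum_range_sub v n
  have hces' : Tendsto (fun n : ℕ => ((n:ℝ))⁻¹ * (v n - v 0)) atTop (nhds γ) := by
    refine hces.congr fun n => ?_
    rw [hsum]
  have hv0 : Tendsto (fun n : ℕ => v 0 / n) atTop (nhds 0) :=
    tendsto_const_div_atTop_nhds_zero_nat (v 0)
  have hvn : Tendsto (fun n : ℕ => v n / n) atTop (nhds γ) := by
    have := hces'.add hv0
    rw [add_zero] at this
    refine this.congr fun n => ?_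
    ring
  have hPn : Tendsto (fun n : ℕ => ((n * P + r : ℕ) : ℝ) / n) atTop (nhds P) := by
    have h1 : Tendsto (fun n : ℕ => (P : ℝ) + r / n) atTop (nhds ((P:ℝ) + 0)) :=
      tendsto_const_nhds.add (tendsto_const_div_atTop_nhds_zero_nat (r:ℝ))
    rw [add_zero] at h1
    refine h1.congr' ?_
    filter_upwards [eventually_ge_atTop 1] with n hn
    have hn0 : ((n:ℝ)) ≠ 0 := by positivity
    push_cast
    field_simp
  have hPne : (P : ℝ) ≠ 0 := by positivity
  have hfin := hvn.div hPn hPne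
  refine hfin.congr' ?_
  filter_upwards [eventually_ge_atTop 1] with n hn
  have hn0 : ((n:ℝ)) ≠ 0 := by
    have : (1:ℝ) ≤ n := by exact_mod_cast hn
    positivity
  have hd0 : ((n * P + r : ℕ) : ℝ) ≠ 0 := by
    have : (1:ℕ) ≤ n * P + r := by
      calc (1:ℕ) ≤ n := hn
      _ = n * 1 := (mul_one n).symm
      _ ≤ n * P := Nat.mul_le_mul_left n hP
      _ ≤ n * P + r := Nat.le_add_right _ _
    have : (1:ℝ) ≤ ((n * P + r : ℕ) : ℝ) := by exact_mod_cast this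
    positivity
  simp only [Pi.div_apply, hv]
  field_simp

set_option maxHeartbeats 1000000 in
theorem stmt17 (a q : ℕ → ℕ) (h0 : q 0 = 1) (h1 : q 1 = a 1)
    (hrec : ∀ k, 1 ≤ k → q (k + 1) = a (k + 1) * q k + q (k - 1))
    (ha : ∀ k, 1 ≤ k → 1 ≤ a k)
    (hper : ∃ p : ℕ, 1 ≤ p ∧ ∃ k₀ : ℕ, ∀ k, k₀ ≤ k → a (k + p) = a k) :
    (∃ E : ℝ, Filter.Tendsto (fun k : ℕ => (1 / (12 * Real.log (q k))) *
        ∑ ℓ ∈ Finset.Icc 1 k, (-1 : ℝ) ^ ℓ * (a ℓ : ℝ)) Filter.atTop (nhds E)) ∧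
    ((∀ ℓ, 1 ≤ ℓ → a ℓ = 1) → Filter.Tendsto (fun k : ℕ => (1 / (12 * Real.log (q k))) *
        ∑ ℓ ∈ Finset.Icc 1 k, (-1 : ℝ) ^ ℓ * (a ℓ : ℝ)) Filter.atTop (nhds 0)) := by
  obtain ⟨p, hp1, k₀, hperiod⟩ := hper
  -- basic facts about q
  have key : ∀ k, 1 ≤ q k ∧ q k ≤ q (k+1) := by
    intro k
    induction k with
    | zero =>
      refine ⟨by omega, ?_⟩
      rw [h0, h1]; exact ha 1 le_rfl
    | succ n ih =>
      have h2 : q (n+2) = a (n+2) * q (n+1) + q n := by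
        have := hrec (n+1) (by omega)
        simpa using this
      have ha2 := ha (n+2) (by omega)
      refine ⟨by omega, ?_⟩
      nlinarith [ih.1, ih.2]
  have hq1 : ∀ k, 1 ≤ q k := fun k => (key k).1
  have hqmono : Monotone q := monotone_nat_of_le_succ fun k => (key k).2
  have hq2 : ∀ k, 2 * q k ≤ q (k + 2) := by
    intro k
    have h2 : q (k+2) = a (k+2) * q (k+1) + q k := by
      have := hrec (k+1) (by omega); simpa using this
    have ha2 := ha (k+2) (by omega)
    have hm : q k ≤ q (k+1) := (key k).2
    nlinarith [hq1 k, hq1 (k+1)]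
  have hqk : ∀ k, k ≤ q k := by
    intro k
    induction k with
    | zero => omega
    | succ n ih =>
      rcases Nat.eq_zero_or_pos n with h | h
      · subst h; simpa using hq1 1
      · have h2 : q (n+1) = a (n+1) * q n + q (n-1) := hrec n h
        have ha2 := ha (n+1) (by omega)
        have := hq1 (n-1)
        nlinarith
  have hqR : ∀ k, (1:ℝ) ≤ (q k : ℝ) := fun k => by exact_mod_cast hq1 k
  have hqpos : ∀ k, (0:ℝ) < (q k : ℝ) := fun k => lt_of_lt_of_le one_pos (hqR k)
  have hlogtop : Tendsto (fun k : ℕ => Real.log (q k)) atTop atTop := by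
    apply Real.tendsto_log_atTop.comp
    apply tendsto_atTop_mono (fun k => ?_) tendsto_natCast_atTop_atTop
    exact_mod_cast hqk k
  constructor
  · set SS : ℕ → ℝ := fun k => ∑ ℓ ∈ Finset.Icc 1 k, (-1 : ℝ) ^ ℓ * (a ℓ : ℝ) with hSS
    set P := 2 * p with hPdef
    have hP1 : 1 ≤ P := by omega
    have hperP : ∀ k, k₀ ≤ k → a (k + P) = a k := by
      intro k hk
      have e : k + P = k + p + p := by omega
      rw [e, hperiod (k+p) (by omega), hperiod k hk]
    set K := max k₀ 1 with hK
    have hK1 : 1 ≤ K := le_max_right _ _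
    have hK0 : k₀ ≤ K := le_max_left _ _
    set x : ℕ → ℝ := fun k => (q k : ℝ) / (q (k-1) : ℝ) with hx
    have hx1 : ∀ k, 1 ≤ x k := by
      intro k
      have hmono : (q (k-1) : ℝ) ≤ (q k : ℝ) := by exact_mod_cast hqmono (Nat.sub_le k 1)
      simp only [hx]
      rw [le_div_iff₀ (hqpos _)]
      linarith
    have hxpos : ∀ k, 0 < x k := fun k => lt_of_lt_of_le one_pos (hx1 k)
    have hxrec : ∀ k, 1 ≤ k → x (k+1) = (a (k+1) : ℝ) + 1 / x k := by
      intro k hk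
      have h2 : (q (k+1) : ℝ) = (a (k+1) : ℝ) * q k + q (k-1) := by exact_mod_cast hrec k hk
      have h3 : k + 1 - 1 = k := by omega
      simp only [hx, h3, one_div_div]
      rw [h2]
      have := hqpos k
      field_simp
    have hxmul : ∀ k, 1 ≤ k → 2 ≤ x k * x (k+1) := by
      intro k hk
      have h2 := hxrec k hk
      have ha2 : (1:ℝ) ≤ (a (k+1) : ℝ) := by exact_mod_cast ha (k+1) (by omega)
      have hxk := hx1 k
      have hxk0 := hxpos k
      have e : x k * x (k+1) = (a (k+1):ℝ) * x k + 1 := by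
        rw [h2]; field_simp
      rw [e]
      nlinarith
    have hstep : ∀ k, K ≤ k → x (k+1+P) - x (k+1) = (x k - x (k+P)) / (x k * x (k+P)) := by
      intro k hk
      have hk1 : 1 ≤ k := le_trans hK1 hk
      have e1 : x (k+1) = (a (k+1):ℝ) + 1 / x k := hxrec k hk1
      have e2 : x (k+P+1) = (a (k+P+1):ℝ) + 1 / x (k+P) := hxrec (k+P) (by omega)
      have e3 : a (k+P+1) = a (k+1) := by
        have h' := hperP (k+1) (by omega)
        rw [show k+P+1 = k+1+P from by omega, h']
      have e4 : k+1+P = k+P+1 := by omega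
      rw [e4, e2, e3, e1]
      have hp1' := hxpos k
      have hp2' := hxpos (k+P)
      field_simp
      ring
    set d : ℕ → ℝ := fun k => |x (k+P) - x k| with hd
    have hd0 : ∀ k, 0 ≤ d k := fun k => abs_nonneg _
    have hdrec : ∀ k, K ≤ k → d (k+1) = d k / (x k * x (k+P)) := by
      intro k hk
      simp only [hd]
      rw [hstep k hk, abs_div, abs_sub_comm (x k),
        abs_of_pos (mul_pos (hxpos k) (hxpos (k+P)))]
    have hdquater : ∀ k, K ≤ k → d (k+2) ≤ d k / 4 := by
      intro k hk
      have e2 := hdrec (k+1) (by omega)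
      have e1 := hdrec k hk
      rw [e2, e1, div_div]
      have hm1 : 2 ≤ x k * x (k+1) := hxmul k (le_trans hK1 hk)
      have hm2 : 2 ≤ x (k+P) * x (k+P+1) := hxmul (k+P) (by omega)
      have ex : k+1+P = k+P+1 := by omega
      rw [ex]
      have hD : 4 ≤ x k * x (k+P) * (x (k+1) * x (k+P+1)) := by
        nlinarith [hxpos k, hxpos (k+P), hxpos (k+1), hxpos (k+P+1)]
      exact div_le_div_of_nonneg_left (hd0 k) (by norm_num) hD
    set M : ℝ := 2 * (d K + d (K+1)) with hM
    have hgeo : ∀ j, d (K + j) ≤ M * (1/2:ℝ)^j := by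
      intro j
      induction j using Nat.twoStepInduction with
      | zero => simp only [pow_zero, mul_one, Nat.add_zero, hM]; nlinarith [hd0 K, hd0 (K+1)]
      | one => rw [pow_one, hM]; nlinarith [hd0 K, hd0 (K+1)]
      | more n ih1 ih2 =>
        have h' := hdquater (K+n) (Nat.le_add_right _ _)
        have e : K + (n+2) = (K+n) + 2 := by omega
        rw [e]
        have hpow : (0:ℝ) ≤ (1/2:ℝ)^n := by positivity
        calc d ((K+n)+2) ≤ d (K+n) / 4 := h'
        _ ≤ (M * (1/2)^n) / 4 := by linarith
        _ = M * (1/2)^(n+2) := by ring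
    have hM0 : 0 ≤ M := by rw [hM]; nlinarith [hd0 K, hd0 (K+1)]
    have htd : ∀ j : ℕ, dist ((fun k : ℕ => Real.log (q (k+P)) - Real.log (q k)) (K+j))
        ((fun k : ℕ => Real.log (q (k+P)) - Real.log (q k)) (K+j+1)) ≤ M * (1/2:ℝ)^j := by
      intro j
      set k := K + j with hkdef
      have hkK : K ≤ k := Nat.le_add_right _ _
      show dist (Real.log (q (k+P)) - Real.log (q k))
        (Real.log (q (k+1+P)) - Real.log (q (k+1))) ≤ M * (1/2:ℝ)^j
      have e1 : Real.log (q (k+1+P)) - Real.log (q (k+P)) = Real.log (x (k+1+P)) := by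
        simp only [hx]
        rw [Real.log_div (ne_of_gt (hqpos _)) (ne_of_gt (hqpos _)),
          show k+1+P-1 = k+P from by omega]
      have e2 : Real.log (q (k+1)) - Real.log (q k) = Real.log (x (k+1)) := by
        simp only [hx]
        rw [Real.log_div (ne_of_gt (hqpos _)) (ne_of_gt (hqpos _)),
          show k+1-1 = k from by omega]
      have e4 : dist (Real.log (q (k+P)) - Real.log (q k))
          (Real.log (q (k+1+P)) - Real.log (q (k+1)))
          = |Real.log (x (k+1+P)) - Real.log (x (k+1))| := by
        rw [dist_comm, Real.dist_eq, ← e1, ← e2]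
        congr 1
        ring
      rw [e4]
      calc |Real.log (x (k+1+P)) - Real.log (x (k+1))| ≤ |x (k+1+P) - x (k+1)| :=
        stmt17_log_lip (hx1 _) (hx1 _)
      _ = d (k+1) := rfl
      _ ≤ M * (1/2)^(j+1) := by
        have h' := hgeo (j+1)
        rwa [show K + (j+1) = k+1 from by omega] at h'
      _ ≤ M * (1/2)^j := by
        have hle : (1/2:ℝ)^(j+1) ≤ (1/2:ℝ)^j := by
          rw [pow_succ]
          nlinarith [pow_nonneg (by norm_num : (0:ℝ) ≤ 1/2) j]
        nlinarith
    have hcauchy : CauchySeq (fun j : ℕ =>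
        (fun k : ℕ => Real.log (q (k+P)) - Real.log (q k)) (K + j)) :=
      cauchySeq_of_le_geometric (1/2) M (by norm_num) htd
    obtain ⟨c, hc⟩ := cauchySeq_tendsto_of_complete hcauchy
    have htc : Tendsto (fun k : ℕ => Real.log (q (k+P)) - Real.log (q k)) atTop (nhds c) := by
      have h' : Tendsto (fun n : ℕ =>
          (fun k : ℕ => Real.log (q (k+P)) - Real.log (q k)) (n + K)) atTop (nhds c) :=
        hc.congr fun n => by rw [add_comm K n]
      exact (tendsto_add_atTop_iff_nat
        (f := fun k : ℕ => Real.log (q (k+P)) - Real.log (q k)) K).mp h'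
    have hclb : Real.log 2 ≤ c := by
      refine ge_of_tendsto' htc fun k => ?_
      have hq2' : 2 * q k ≤ q (k+P) := by
        calc 2 * q k ≤ q (k+2) := hq2 k
        _ ≤ q (k+P) := hqmono (by omega)
      have hlog : Real.log (2 * (q k : ℝ)) ≤ Real.log (q (k+P)) := by
        apply Real.log_le_log (mul_pos two_pos (hqpos k))
        exact_mod_cast hq2'
      rw [Real.log_mul (by norm_num) (ne_of_gt (hqpos k))] at hlog
      show Real.log 2 ≤ Real.log (q (k+P)) - Real.log (q k)
      linarith
    have hcpos : 0 < c := lt_of_lt_of_le (Real.log_pos one_lt_two) hclb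
    have hbshift : Tendsto (fun k : ℕ => Real.log (q k) / k) atTop (nhds (c / P)) :=
      stmt17_shift (u := fun k => Real.log (q k)) hP1 htc
    -- the alternating sum
    have hSstep : ∀ m : ℕ, SS (m+1) = SS m + (-1:ℝ)^(m+1) * (a (m+1) : ℝ) := by
      intro m
      simp only [hSS]
      exact Finset.sum_Icc_succ_top (by omega) _
    have hCst : ∀ k, K ≤ k → SS (k+P) - SS k = SS (K+P) - SS K := by
      intro k hk
      induction k, hk using Nat.le_induction with
      | base => rfl
      | succ n hn ih =>
        have e1 : SS (n+1+P) = SS (n+P) + (-1:ℝ)^(n+P+1) * (a (n+P+1) : ℝ) := by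
          rw [show n+1+P = (n+P)+1 from by omega]
          exact hSstep (n+P)
        have e2 : SS (n+1) = SS n + (-1:ℝ)^(n+1) * (a (n+1) : ℝ) := hSstep n
        have e3 : a (n+P+1) = a (n+1) := by
          have h' := hperP (n+1) (by omega)
          rw [show n+P+1 = n+1+P from by omega, h']
        have e4 : (-1:ℝ)^(n+P+1) = (-1:ℝ)^(n+1) := by
          rw [show n+P+1 = (n+1) + 2*p from by omega, pow_add, pow_mul]
          norm_num
        rw [e1, e2, e3, e4]
        linarith
    have hSten : Tendsto (fun k : ℕ => SS (k+P) - SS k) atTop (nhds (SS (K+P) - SS K)) := by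
      refine tendsto_const_nhds.congr' ?_
      filter_upwards [eventually_ge_atTop K] with k hk
      exact (hCst k hk).symm
    have hSshift : Tendsto (fun k : ℕ => SS k / k) atTop (nhds ((SS (K+P) - SS K) / P)) :=
      stmt17_shift (u := SS) hP1 hSten
    -- assemble
    clear_value SS P K x d M
    refine ⟨((SS (K+P) - SS K) / P) / (12 * (c / P)), ?_⟩
    have hPpos : (0:ℝ) < (P:ℝ) := by exact_mod_cast (by omega : 0 < P)
    have hne : (12:ℝ) * (c / P) ≠ 0 :=
      ne_of_gt (mul_pos (by norm_num) (div_pos hcpos hPpos))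
    have hdiv := hSshift.div (hbshift.const_mul 12) hne
    refine hdiv.congr' ?_
    filter_upwards [eventually_ge_atTop 2] with k hk
    have hk0 : ((k:ℝ)) ≠ 0 := by
      have : (2:ℝ) ≤ (k:ℝ) := by exact_mod_cast hk
      linarith
    have hqk2 : (2:ℝ) ≤ (q k : ℝ) := by
      have h' := hqk k
      have : (2:ℕ) ≤ q k := by omega
      exact_mod_cast this
    have hlogpos : 0 < Real.log (q k) := Real.log_pos (by linarith)
    have hlogne : Real.log (q k) ≠ 0 := ne_of_gt hlogpos
    simp only [hSS, Pi.div_apply]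
    field_simp
  · -- golden ratio case
    intro hall
    have hform : ∀ k, (∑ ℓ ∈ Finset.Icc 1 k, (-1:ℝ)^ℓ * (a ℓ : ℝ)) = ((-1:ℝ)^k - 1)/2 := by
      intro k
      induction k with
      | zero => simp
      | succ n ih =>
        rw [Finset.sum_Icc_succ_top (by omega : 1 ≤ n + 1), ih, hall (n+1) (by omega)]
        rw [pow_succ]
        push_cast
        ring
    apply squeeze_zero_norm' (a := fun k : ℕ => 1 / (12 * Real.log (q k)))
    · filter_upwards [eventually_ge_atTop 2] with k hk
      have hqk2 : (2:ℝ) ≤ (q k : ℝ) := by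
        have h' := hqk k
        have : (2:ℕ) ≤ q k := by omega
        exact_mod_cast this
      have hlogpos : 0 < Real.log (q k) := Real.log_pos (by linarith)
      rw [norm_mul, hform]
      have habs1 : |(-1:ℝ)^k| = 1 := by
        rw [abs_pow, abs_neg, abs_one, one_pow]
      have h1 : ‖((-1:ℝ)^k - 1)/2‖ ≤ 1 := by
        rw [Real.norm_eq_abs, abs_div]
        have : |(-1:ℝ)^k - 1| ≤ 2 := by
          calc |(-1:ℝ)^k - 1| ≤ |(-1:ℝ)^k| + |(1:ℝ)| := abs_sub _ _
          _ = 2 := by rw [habs1, abs_one]; norm_num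
        rw [abs_two]
        linarith
      have h2 : ‖1 / (12 * Real.log (q k))‖ = 1 / (12 * Real.log (q k)) := by
        rw [Real.norm_eq_abs, abs_of_pos (by positivity)]
      calc ‖1 / (12 * Real.log (q k))‖ * ‖((-1:ℝ)^k - 1)/2‖
          ≤ ‖1 / (12 * Real.log (q k))‖ * 1 := by
            apply mul_le_mul_of_nonneg_left h1 (norm_nonneg _)
      _ = 1 / (12 * Real.log (q k)) := by rw [mul_one, h2]
    · have h12 : Tendsto (fun k : ℕ => 12 * Real.log (q k)) atTop atTop :=
        hlogtop.const_mul_atTop (by norm_num : (0:ℝ) < 12)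
      have := h12.inv_tendsto_atTop
      refine this.congr fun k => ?_
      simp [one_div]
end
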